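/- arXiv:2206.08725 — 12 statements merged into one kernel-verified Lean document; each statement's English description precedes it below -/
import Mathlib

section
/- Let C be a linear code of length n over R with component codes C_1, C_2, C_3, C_4, and suppose C_i ≠ {0} for each i = 1,2,3,4. Then d_L(C) = min_{1 ≤ i ≤ 4} d_H(C_i). -/
open scoped BigOperators

/-- The ring `R = F_q + uF_q + vF_q + uvF_q ≅ F_q^4` (componentwise operations). -/
abbrev RR (F : Type*) := Fin 4 → F

/-- The pairwise orthogonal idempotents `γ_1, γ_2, γ_3, γ_4` of `R`,
realized as the standard idempotents of `F_q^4`. -/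
def gam (F : Type*) [Field F] (i : Fin 4) : RR F := Pi.single i 1

/-- The `i`-th component code `C_i ⊆ F_q^n` of a code `C ⊆ R^n`. -/
def compCode {F : Type*} [Field F] {n : ℕ} (C : Set (Fin n → RR F)) (i : Fin 4) :
    Set (Fin n → F) :=
  {x | ∃ c ∈ C, ∀ j, c j i = x j}

/-- Euclidean dual of a code over `R`. -/
def euclDualR {F : Type*} [Field F] {n : ℕ} (C : Set (Fin n → RR F)) :
    Set (Fin n → RR F) :=
  {s | ∀ t ∈ C, ∑ j, t j * s j = 0}

/-- `l`-Galois dual of a code over `R`; apply with `pl = p ^ l`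
(the `l`-Galois inner product is `[t,s]_l = ∑ j, t j * (s j) ^ (p ^ l)`,
since `F^l(r) = r ^ (p ^ l)`). -/
def galDualR {F : Type*} [Field F] {n : ℕ} (pl : ℕ) (C : Set (Fin n → RR F)) :
    Set (Fin n → RR F) :=
  {s | ∀ t ∈ C, ∑ j, t j * s j ^ pl = 0}

/-- `l`-Galois dual of a code over the field `F = F_q`; apply with `pl = p ^ l`. -/
def galDualF {F : Type*} [Field F] {ι : Type*} [Fintype ι] (pl : ℕ) (D : Set (ι → F)) :
    Set (ι → F) :=
  {x | ∀ c ∈ D, ∑ j, c j * x j ^ pl = 0}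

/-- Lee weight of a vector over `R`: the sum of the Hamming weights of the
quadruples of `γ`-components of the coordinates. -/
def leeWt {F : Type*} [Field F] [DecidableEq F] {n : ℕ} (c : Fin n → RR F) : ℕ :=
  ∑ j, hammingNorm (c j)

/-- Minimum Lee distance of a code over `R`. -/
noncomputable def dLee {F : Type*} [Field F] [DecidableEq F] {n : ℕ} (C : Set (Fin n → RR F)) : ℕ :=
  sInf (leeWt '' {c ∈ C | c ≠ 0})

/-- Minimum Hamming distance of a code over `F_q`. -/
noncomputable def dHam {F : Type*} [Field F] [DecidableEq F] {ι : Type*} [Fintype ι]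
    (D : Set (ι → F)) : ℕ :=
  sInf (hammingNorm '' {x ∈ D | x ≠ 0})

/-- The Gray map `ρ : R^n → F_q^{4n}`. -/
def gray {F : Type*} [Field F] {n : ℕ} (c : Fin n → RR F) : Fin n × Fin 4 → F :=
  fun ji => c ji.1 ji.2

/-- The code `C^α = {(α_1 c_1, …, α_n c_n) : c ∈ C}` over `R`. -/
def scaleCode {F : Type*} [Field F] {n : ℕ} (α : Fin n → RR F)
    (C : Set (Fin n → RR F)) : Set (Fin n → RR F) :=
  (fun c => fun j => α j * c j) '' C

/-- The code `C^a = {(a_1 c_1, …, a_n c_n) : c ∈ C}` over `F_q`. -/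
def scaleCodeF {F : Type*} [Field F] {n : ℕ} (a : Fin n → F)
    (D : Set (Fin n → F)) : Set (Fin n → F) :=
  (fun c => fun j => a j * c j) '' D

/-- `P_S`: the submatrix of `P` obtained by deleting the rows and columns
indexed by `S` (its determinant is `1` when `S` is everything, since the
empty matrix has determinant `1`). -/
def minorOff {F : Type*} [Field F] {m : ℕ} (P : Matrix (Fin m) (Fin m) F)
    (S : Finset (Fin m)) : Matrix {i : Fin m // i ∉ S} {i : Fin m // i ∉ S} F :=
  P.submatrix (fun a => (a : Fin m)) (fun a => (a : Fin m))

lemma hammingNorm_single' {ι : Type*} [Fintype ι] [DecidableEq ι]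
    {F : Type*} [Zero F] [DecidableEq F] (i : ι) (a : F) :
    hammingNorm (Pi.single i a : ι → F) = if a = 0 then 0 else 1 := by
  unfold hammingNorm
  split_ifs with h
  · simp [h]
  · rw [Finset.card_eq_one]
    refine ⟨i, ?_⟩
    ext i'
    simp only [Finset.mem_filter, Finset.mem_univ, true_and, Finset.mem_singleton,
      Pi.single_apply]
    constructor
    · intro h'
      by_contra hne
      simp [hne] at h'
    · intro h'
      simp [h', h]

section Aux

set_option linter.unusedSectionVars false

variable {F : Type*} [Field F] [DecidableEq F] {n : ℕ}

lemma leeWt_eq_sum (c : Fin n → RR F) :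
    leeWt c = ∑ i : Fin 4, hammingNorm (fun j => c j i) := by
  unfold leeWt hammingNorm
  simp_rw [Finset.card_filter]
  rw [Finset.sum_comm]

lemma gamSmul_apply (i : Fin 4) (c : Fin n → RR F) (j : Fin n) :
    (gam F i • c) j = Pi.single i (c j i) := by
  funext i'
  simp only [Pi.smul_apply, smul_eq_mul, Pi.mul_apply, gam, Pi.single_apply]
  split_ifs with h
  · subst h; simp
  · simp

/-- From a nonzero element of a component code, construct a codeword with matching Lee weight. -/
lemma exists_codeword_of_compCode (C : Submodule (RR F) (Fin n → RR F)) (i : Fin 4)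
    (x : Fin n → F) (hx : x ∈ compCode (C : Set (Fin n → RR F)) i) (hx0 : x ≠ 0) :
    ∃ c ∈ (C : Set (Fin n → RR F)), c ≠ 0 ∧ leeWt c = hammingNorm x := by
  obtain ⟨c0, hc0, hc0i⟩ := hx
  refine ⟨gam F i • c0, C.smul_mem _ hc0, ?_, ?_⟩
  · intro hzero
    apply hx0
    funext j
    have := congrFun (congrFun hzero j) i
    rw [gamSmul_apply] at this
    simpa [hc0i j] using this
  · unfold leeWt
    have : ∀ j, hammingNorm ((gam F i • c0) j) = if x j = 0 then 0 else 1 := by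
      intro j
      rw [gamSmul_apply, hc0i j, hammingNorm_single']
    simp_rw [this]
    unfold hammingNorm
    rw [Finset.card_filter]
    congr 1
    funext j
    by_cases h : x j = 0 <;> simp [h]

end Aux

/-- `d_L(C) = min_{1 ≤ i ≤ 4} d_H(C_i)` (component codes nonzero). -/
theorem statement2 {p e n : ℕ} (hp : p.Prime) (he : 0 < e)
    (F : Type*) [Field F] [Fintype F] [DecidableEq F] (hcard : Fintype.card F = p ^ e)
    (C : Submodule (RR F) (Fin n → RR F))
    (hnz : ∀ i, compCode (C : Set (Fin n → RR F)) i ≠ {0}) :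
    dLee (C : Set (Fin n → RR F)) =
      Finset.univ.inf' Finset.univ_nonempty
        (fun i : Fin 4 => dHam (compCode (C : Set (Fin n → RR F)) i)) := by
  classical
  set Cs := (C : Set (Fin n → RR F)) with hCs
  -- each component code contains a nonzero element
  have hzero_mem : ∀ i, (0 : Fin n → F) ∈ compCode Cs i :=
    fun i => ⟨0, C.zero_mem, fun j => rfl⟩
  have hex : ∀ i : Fin 4, ∃ x ∈ compCode Cs i, x ≠ 0 := by
    intro i
    by_contra h
    push_neg at h
    exact hnz i (Set.eq_singleton_iff_unique_mem.mpr ⟨hzero_mem i, fun x hx => h x hx⟩)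
  -- the set defining dLee is nonempty
  have hCne : ∃ c ∈ Cs, c ≠ (0 : Fin n → RR F) := by
    obtain ⟨x, hx, hx0⟩ := hex 0
    obtain ⟨c, hc, hc0, _⟩ := exists_codeword_of_compCode C 0 x hx hx0
    exact ⟨c, hc, hc0⟩
  -- the sets defining each dHam are nonempty, and dHam is attained
  have hdHam_le : ∀ i, ∀ x ∈ compCode Cs i, x ≠ 0 → dHam (compCode Cs i) ≤ hammingNorm x := by
    intro i x hx hx0
    exact Nat.sInf_le ⟨x, ⟨hx, hx0⟩, rfl⟩
  apply le_antisymm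
  · -- dLee ≤ min: pick i₀ achieving the min
    obtain ⟨i₀, _, hmin⟩ := Finset.exists_mem_eq_inf' (Finset.univ_nonempty (α := Fin 4))
      (fun i : Fin 4 => dHam (compCode Cs i))
    rw [hmin]
    -- dHam is attained by some nonzero x ∈ C_{i₀}
    have hne : (hammingNorm '' {x ∈ compCode Cs i₀ | x ≠ 0}).Nonempty := by
      obtain ⟨x, hx, hx0⟩ := hex i₀
      exact ⟨hammingNorm x, x, ⟨hx, hx0⟩, rfl⟩
    obtain ⟨x, ⟨hx, hx0⟩, hxeq⟩ := Nat.sInf_mem hne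
    obtain ⟨c, hc, hc0, hcw⟩ := exists_codeword_of_compCode C i₀ x hx hx0
    calc dLee Cs ≤ leeWt c := Nat.sInf_le ⟨c, ⟨hc, hc0⟩, rfl⟩
      _ = hammingNorm x := hcw
      _ = dHam (compCode Cs i₀) := hxeq
  · -- min ≤ dLee
    apply le_csInf
    · obtain ⟨c, hc, hc0⟩ := hCne
      exact ⟨leeWt c, c, ⟨hc, hc0⟩, rfl⟩
    rintro w ⟨c, ⟨hc, hc0⟩, rfl⟩
    -- some component of c is nonzero
    have : ∃ i : Fin 4, (fun j => c j i) ≠ (0 : Fin n → F) := by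
      by_contra h
      push_neg at h
      apply hc0
      funext j i
      exact congrFun (h i) j
    obtain ⟨i, hi⟩ := this
    have h1 : Finset.univ.inf' Finset.univ_nonempty
        (fun i : Fin 4 => dHam (compCode Cs i)) ≤ dHam (compCode Cs i) :=
      Finset.inf'_le _ (Finset.mem_univ i)
    have h2 : dHam (compCode Cs i) ≤ hammingNorm (fun j => c j i) :=
      hdHam_le i _ ⟨c, hc, fun j => rfl⟩ hi
    have h3 : hammingNorm (fun j => c j i) ≤ leeWt c := by
      rw [leeWt_eq_sum]
      exact Finset.single_le_sum (f := fun i : Fin 4 => hammingNorm (fun j => c j i))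
        (fun _ _ => Nat.zero_le _) (Finset.mem_univ i)
    omega
end

section
/- Let C = γ_1C_1 ⊕ γ_2C_2 ⊕ γ_3C_3 ⊕ γ_4C_4 be a linear code of length n over R with component codes C_1, C_2, C_3, C_4, and let 0 ≤ l ≤ e−1. Then C^{⊥_l} = γ_1C_1^{⊥_l} ⊕ γ_2C_2^{⊥_l} ⊕ γ_3C_3^{⊥_l} ⊕ γ_4C_4^{⊥_l}, where C_i^{⊥_l} denotes the l-Galois dual of C_i in F_q^n. -/
open scoped BigOperators

/-- `C^{⊥_l} = γ_1C_1^{⊥_l} ⊕ γ_2C_2^{⊥_l} ⊕ γ_3C_3^{⊥_l} ⊕ γ_4C_4^{⊥_l}`. -/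
theorem statement4 {p e l n : ℕ} (hp : p.Prime) (he : 0 < e) (hl : l < e)
    (F : Type*) [Field F] [Fintype F] (hcard : Fintype.card F = p ^ e)
    (C : Submodule (RR F) (Fin n → RR F)) :
    galDualR (p ^ l) (C : Set (Fin n → RR F)) =
      {s | ∃ x : Fin 4 → (Fin n → F),
        (∀ i, x i ∈ galDualF (p ^ l) (compCode (C : Set (Fin n → RR F)) i)) ∧
        ∀ j, s j = ∑ i : Fin 4, x i j • gam F i} := by
  ext s
  constructor
  · intro hs
    refine ⟨fun i j => s j i, fun i c hc => ?_, fun j => ?_⟩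
    · obtain ⟨t, htC, htc⟩ := hc
      have h := congrFun (hs t htC) i
      simp only [Finset.sum_apply, Pi.mul_apply, Pi.pow_apply, Pi.zero_apply] at h
      simp only [← htc]
      exact h
    · funext i'
      simp [gam, Finset.sum_apply, Pi.single_apply]
  · rintro ⟨x, hx, hsx⟩ t htC
    funext i
    have hsi : ∀ j, s j i = x i j := by
      intro j
      rw [hsx j]
      simp [gam, Finset.sum_apply, Pi.single_apply]
    have h := hx i (fun j => t j i) ⟨t, htC, fun j => rfl⟩
    simp only [Finset.sum_apply, Pi.mul_apply, Pi.pow_apply, Pi.zero_apply, hsi]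
    exact h
end

section
/- Let C be a linear code of length n over R with component codes C_1, C_2, C_3, C_4, and let 0 ≤ l ≤ e−1. Then C is an l-Galois LCD code over R if and only if C_i is an l-Galois LCD code over F_q for every i = 1,2,3,4. -/
open scoped BigOperators

/-- `C` is `l`-Galois LCD over `R` iff each component code `C_i`
is `l`-Galois LCD over `F_q`. -/
theorem statement5 {p e l n : ℕ} (hp : p.Prime) (he : 0 < e) (hl : l < e)
    (F : Type*) [Field F] [Fintype F] (hcard : Fintype.card F = p ^ e)
    (C : Submodule (RR F) (Fin n → RR F)) :
    (C : Set (Fin n → RR F)) ∩ galDualR (p ^ l) (C : Set (Fin n → RR F)) = {0} ↔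
      ∀ i, compCode (C : Set (Fin n → RR F)) i ∩
        galDualF (p ^ l) (compCode (C : Set (Fin n → RR F)) i) = {0} := by
  have hpl : p ^ l ≠ 0 := pow_ne_zero _ hp.pos.ne'
  constructor
  · intro h i
    apply Set.eq_singleton_iff_unique_mem.2
    refine ⟨⟨⟨0, C.zero_mem, fun j => rfl⟩, ?_⟩, ?_⟩
    · intro c hc
      simp [zero_pow hpl]
    · rintro x ⟨⟨c, hcC, hcx⟩, hxd⟩
      set y : Fin n → RR F := fun j => Pi.single i (x j) with hy
      have hyC : y ∈ C := by
        have hs := C.smul_mem (gam F i) hcC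
        have hye : y = gam F i • c := by
          funext j k
          simp only [hy, Pi.smul_apply, smul_eq_mul, gam, Pi.mul_apply, Pi.single_apply]
          split_ifs with hk
          · subst hk; rw [one_mul, hcx j]
          · rw [zero_mul]
        rwa [hye]
      have hyD : y ∈ galDualR (p ^ l) (C : Set (Fin n → RR F)) := by
        intro t htC
        funext k
        rw [show (0 : RR F) k = 0 from rfl, Finset.sum_apply]
        by_cases hk : k = i
        · subst hk
          have hm : (fun j => t j k) ∈ compCode (C : Set (Fin n → RR F)) k :=
            ⟨t, htC, fun j => rfl⟩
          have h0 := hxd _ hm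
          calc ∑ j, (t j * y j ^ p ^ l) k = ∑ j, t j k * (x j) ^ p ^ l := by
                refine Finset.sum_congr rfl fun j _ => ?_
                simp [hy, Pi.pow_apply]
            _ = 0 := h0
        · refine Finset.sum_eq_zero fun j _ => ?_
          have hz : y j k = 0 := by simp [hy, Pi.single_apply, hk]
          simp [Pi.pow_apply, hz, zero_pow hpl]
      have hy0 : y = 0 := by
        have hm := h ▸ Set.mem_inter hyC hyD
        simpa using hm
      funext j
      have hj := congrFun (congrFun hy0 j) i
      simpa [hy] using hj
  · intro h
    apply Set.eq_singleton_iff_unique_mem.2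
    refine ⟨⟨C.zero_mem, ?_⟩, ?_⟩
    · intro t ht
      funext k
      rw [show (0 : RR F) k = 0 from rfl, Finset.sum_apply]
      refine Finset.sum_eq_zero fun j _ => ?_
      have hz : ((0 : Fin n → RR F) j) k = 0 := rfl
      simp [Pi.pow_apply, hz, zero_pow hpl]
    · rintro c ⟨hcC, hcD⟩
      funext j k
      have hmem : (fun j => c j k) ∈ compCode (C : Set (Fin n → RR F)) k ∩
          galDualF (p ^ l) (compCode (C : Set (Fin n → RR F)) k) := by
        refine ⟨⟨c, hcC, fun j => rfl⟩, ?_⟩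
        rintro d ⟨t, htC, htd⟩
        have h0 := congrFun (hcD t htC) k
        rw [Finset.sum_apply] at h0
        calc ∑ j, d j * c j k ^ p ^ l = ∑ j, (t j * c j ^ p ^ l) k := by
              refine Finset.sum_congr rfl fun j _ => ?_
              simp [Pi.pow_apply, htd j]
          _ = 0 := h0
      have hm2 := (h k) ▸ hmem
      have hz : (fun j => c j k) = 0 := by simpa using hm2
      exact congrFun hz j
end

section
/- Let C be a linear code of length n over R with component codes C_1, C_2, C_3, C_4, and let 0 ≤ l ≤ e−1. Then C is l-Galois self-dual (C = C^{⊥_l}) if and only if C_i = C_i^{⊥_l} for every i = 1,2,3,4. -/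
open scoped BigOperators

/-- `C` is `l`-Galois self-dual iff each `C_i` is. -/
theorem statement7 {p e l n : ℕ} (hp : p.Prime) (he : 0 < e) (hl : l < e)
    (F : Type*) [Field F] [Fintype F] (hcard : Fintype.card F = p ^ e)
    (C : Submodule (RR F) (Fin n → RR F)) :
    (C : Set (Fin n → RR F)) = galDualR (p ^ l) (C : Set (Fin n → RR F)) ↔
      ∀ i, compCode (C : Set (Fin n → RR F)) i =
        galDualF (p ^ l) (compCode (C : Set (Fin n → RR F)) i) := by
  classical
  have hpl : p ^ l ≠ 0 := pow_ne_zero _ hp.pos.ne'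
  set pl := p ^ l with hpldef
  have hsingle : ∀ (i : Fin 4) (x : Fin n → F),
      x ∈ compCode (C : Set (Fin n → RR F)) i ↔
        (fun j => (Pi.single i (x j) : RR F)) ∈ C := by
    intro i x
    constructor
    · rintro ⟨c, hc, hcx⟩
      have hrw : (fun j => (Pi.single i (x j) : RR F)) = (Pi.single i 1 : RR F) • c := by
        funext j k
        simp only [Pi.smul_apply, smul_eq_mul, Pi.mul_apply]
        by_cases h : k = i
        · subst h; simp [hcx j]
        · simp [Pi.single_eq_of_ne h]
      rw [hrw]; exact C.smul_mem _ hc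
    · intro h
      exact ⟨_, h, fun j => by simp⟩
  have hmemC : ∀ c : Fin n → RR F,
      c ∈ C ↔ ∀ i, (fun j => c j i) ∈ compCode (C : Set (Fin n → RR F)) i := by
    intro c
    constructor
    · intro hc i; exact ⟨c, hc, fun j => rfl⟩
    · intro h
      have hc : c = ∑ i : Fin 4, (fun j => (Pi.single i (c j i) : RR F)) := by
        funext j k
        simp [Finset.sum_apply]
      rw [hc]
      exact Submodule.sum_mem _ fun i _ => (hsingle i _).1 (h i)
  have hdual : ∀ s : Fin n → RR F,
      s ∈ galDualR pl (C : Set (Fin n → RR F)) ↔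
        ∀ i, (fun j => s j i) ∈ galDualF pl (compCode (C : Set (Fin n → RR F)) i) := by
    intro s
    constructor
    · rintro hs i x ⟨c, hc, hcx⟩
      have h1 := congrFun (hs c hc) i
      simp only [Finset.sum_apply, Pi.mul_apply, Pi.pow_apply, Pi.zero_apply] at h1
      calc ∑ j, x j * s j i ^ pl = ∑ j, c j i * s j i ^ pl := by
            refine Finset.sum_congr rfl fun j _ => ?_
            rw [hcx j]
        _ = 0 := h1
    · intro hs t ht
      funext i
      simp only [Finset.sum_apply, Pi.mul_apply, Pi.pow_apply, Pi.zero_apply]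
      exact hs i (fun j => t j i) ⟨t, ht, fun j => rfl⟩
  constructor
  · intro hC i
    ext x
    constructor
    · intro hx
      have h1 : (fun j => (Pi.single i (x j) : RR F)) ∈ galDualR pl (C : Set (Fin n → RR F)) :=
        hC ▸ (hsingle i x).1 hx
      have h2 := (hdual _).1 h1 i
      have hrw : (fun j => (Pi.single i (x j) : RR F) i) = x := by
        funext j; simp
      rwa [hrw] at h2
    · intro hx
      have hmem : (fun j => (Pi.single i (x j) : RR F)) ∈ galDualR pl (C : Set (Fin n → RR F)) := by
        refine (hdual _).2 fun k => ?_
        by_cases hk : k = i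
        · subst hk
          have hrw : (fun j => (Pi.single k (x j) : RR F) k) = x := by
            funext j; simp
          rwa [hrw]
        · have hrw : (fun j => (Pi.single i (x j) : RR F) k) = 0 := by
            funext j; simp [Pi.single_eq_of_ne hk]
          rw [hrw]
          intro c hc
          simp [zero_pow hpl]
      rw [← hC] at hmem
      exact (hsingle i x).2 hmem
  · intro h
    ext s
    constructor
    · intro hs
      exact (hdual s).2 fun i => (h i) ▸ ((hmemC s).1 hs i)
    · intro hs
      exact (hmemC s).2 fun i => (h i).symm ▸ ((hdual s).1 hs i)
end

section
/- Let 0 ≤ l ≤ e−1 and, for i = 1,2,3,4, let G_i be a k_i × n matrix over F_q of rank k_i whose rows form a basis of an F_q-linear code C_i ⊆ F_q^n, and let C = γ_1C_1 ⊕ γ_2C_2 ⊕ γ_3C_3 ⊕ γ_4C_4 ⊆ R^n. Then C is an l-Galois LCD code over R if and only if, for each i = 1,2,3,4, the k_i × k_i matrix G_i(F^{e−l}(G_i))^T is nonsingular over F_q. -/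
open scoped BigOperators

open Matrix in
lemma fieldStep {p e l n : ℕ} (hp : p.Prime) (hl : l < e)
    {F : Type*} [Field F] [Fintype F] (hcard : Fintype.card F = p ^ e)
    {k : ℕ} (G : Matrix (Fin k) (Fin n) F)
    (hG : LinearIndependent F (fun r : Fin k => G r)) :
    (∀ x ∈ Submodule.span F (Set.range fun r : Fin k => G r),
        x ∈ galDualF (p ^ l)
          (Submodule.span F (Set.range fun r : Fin k => G r) : Set (Fin n → F)) → x = 0)
      ↔ (G * (G.map (fun x => x ^ p ^ (e - l)))ᵀ).det ≠ 0 := by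
  classical
  -- characteristic
  have hring : CharP F (ringChar F) := ringChar.charP F
  have hrp : (ringChar F).Prime := CharP.char_is_prime F (ringChar F)
  have hcast : ((p ^ e : ℕ) : F) = 0 := by
    rw [← hcard]; exact FiniteField.cast_card_eq_zero F
  have hdvd : ringChar F ∣ p ^ e := (CharP.cast_eq_zero_iff F (ringChar F) _).mp hcast
  have hpe : ringChar F = p :=
    (Nat.prime_dvd_prime_iff_eq hrp hp).mp (hrp.dvd_of_dvd_pow hdvd)
  have hcharp : CharP F p := hpe ▸ hring
  have : ExpChar F p := ExpChar.prime hp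
  set m := e - l with hm
  set H := G.map (fun x => x ^ p ^ m) with hH
  set f : F →+* F := iterateFrobenius F p m with hf
  have hfdef : ∀ x : F, f x = x ^ p ^ m := fun x => iterateFrobenius_def p m x
  have hfinj : Function.Injective f := f.injective
  have hxe : ∀ x : F, (x ^ p ^ l) ^ p ^ m = x := by
    intro x
    rw [← pow_mul, ← pow_add, Nat.add_sub_cancel' hl.le, ← hcard]
    exact FiniteField.pow_card x
  -- per-row equivalence
  have hrow : ∀ (x : Fin n → F) (r : Fin k),
      (∑ j, G r j * x j ^ p ^ l = 0) ↔ (∑ j, H r j * x j = 0) := by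
    intro x r
    have hmap : f (∑ j, G r j * x j ^ p ^ l) = ∑ j, H r j * x j := by
      rw [map_sum]
      refine Finset.sum_congr rfl fun j _ => ?_
      rw [_root_.map_mul, hfdef, hfdef, hxe, hH, Matrix.map_apply]
    constructor
    · intro h; rw [h, map_zero] at hmap; exact hmap.symm
    · intro h; apply hfinj; rw [hmap, h, map_zero]
  -- dual membership characterization
  have hdual : ∀ x : Fin n → F,
      x ∈ galDualF (p ^ l)
          (Submodule.span F (Set.range fun r : Fin k => G r) : Set (Fin n → F))
        ↔ ∀ r, ∑ j, G r j * x j ^ p ^ l = 0 := by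
    intro x
    constructor
    · intro hx r
      exact hx (G r) (Submodule.subset_span (Set.mem_range_self r))
    · intro hx c hc
      induction hc using Submodule.span_induction with
      | mem c hc => obtain ⟨r, rfl⟩ := hc; exact hx r
      | zero => simp
      | add a b _ _ ha hb =>
          simp only [Pi.add_apply, add_mul, Finset.sum_add_distrib, ha, hb, add_zero]
      | smul t a _ ha =>
          simp only [Pi.smul_apply, smul_eq_mul, mul_assoc, ← Finset.mul_sum, ha, mul_zero]
  -- reduce to matrix statement
  rw [← Matrix.det_transpose, Matrix.transpose_mul, Matrix.transpose_transpose]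
  rw [Ne, ← Matrix.exists_mulVec_eq_zero_iff]
  push_neg
  constructor
  · intro h y hy0 hy
    apply hy0
    have hmem : (∑ s, y s • G s) ∈ Submodule.span F (Set.range fun r : Fin k => G r) :=
      (Submodule.mem_span_range_iff_exists_fun F).mpr ⟨y, rfl⟩
    have hzero : ∑ s, y s • G s = 0 := by
      apply h _ hmem
      rw [hdual]
      intro r
      rw [hrow]
      have : ∑ j, H r j * (∑ s, y s • G s) j = ((H * Gᵀ).mulVec y) r := by
        simp only [Matrix.mulVec, dotProduct, Matrix.mul_apply, Finset.sum_apply,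
          Pi.smul_apply, smul_eq_mul, Finset.mul_sum, Finset.sum_mul, Matrix.transpose_apply]
        rw [Finset.sum_comm]
        exact Finset.sum_congr rfl fun s _ => Finset.sum_congr rfl fun j _ => by ring
      rw [this, hy, Pi.zero_apply]
    exact funext (Fintype.linearIndependent_iff.mp hG y hzero)
  · intro h x hx hxd
    obtain ⟨y, rfl⟩ := (Submodule.mem_span_range_iff_exists_fun F).mp hx
    have hy : (H * Gᵀ).mulVec y = 0 := by
      funext r
      have h1 : ∑ j, H r j * (∑ s, y s • G s) j = ((H * Gᵀ).mulVec y) r := by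
        simp only [Matrix.mulVec, dotProduct, Matrix.mul_apply, Finset.sum_apply,
          Pi.smul_apply, smul_eq_mul, Finset.mul_sum, Finset.sum_mul, Matrix.transpose_apply]
        rw [Finset.sum_comm]
        exact Finset.sum_congr rfl fun s _ => Finset.sum_congr rfl fun j _ => by ring
      have h2 := ((hdual _).mp hxd r)
      rw [hrow] at h2
      rw [Pi.zero_apply, ← h1, h2]
    have : y = 0 := by
      by_contra hy0
      exact absurd hy (h y hy0)
    simp [this]

open Matrix in
/-- `C = γ_1C_1 ⊕ γ_2C_2 ⊕ γ_3C_3 ⊕ γ_4C_4` is `l`-Galois LCD over `R`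
iff each `G_i (F^{e−l}(G_i))^T` is nonsingular over `F_q`. -/
theorem statement8 {p e l n : ℕ} (hp : p.Prime) (he : 0 < e) (hl : l < e)
    (F : Type*) [Field F] [Fintype F] (hcard : Fintype.card F = p ^ e)
    (k : Fin 4 → ℕ) (G : ∀ i, Matrix (Fin (k i)) (Fin n) F)
    (hGli : ∀ i, LinearIndependent F (fun r : Fin (k i) => G i r))
    (C : Submodule (RR F) (Fin n → RR F))
    (hC : ∀ i, compCode (C : Set (Fin n → RR F)) i =
      (Submodule.span F (Set.range (fun r : Fin (k i) => G i r)) : Set (Fin n → F))) :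
    (C : Set (Fin n → RR F)) ∩ galDualR (p ^ l) (C : Set (Fin n → RR F)) = {0} ↔
      ∀ i, (G i * ((G i).map (fun x => x ^ p ^ (e - l)))ᵀ).det ≠ 0 := by
    classical
  have hppos : p ^ l ≠ 0 := pow_ne_zero l hp.pos.ne'
  -- membership in C is componentwise
  have hmemC : ∀ c : Fin n → RR F, c ∈ C ↔
      ∀ i, (fun j => c j i) ∈ compCode (C : Set (Fin n → RR F)) i := by
    intro c
    constructor
    · intro hc i; exact ⟨c, hc, fun j => rfl⟩
    · intro h
      choose t ht hteq using h
      have hc : c = ∑ i, gam F i • t i := by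
        funext j i
        rw [Finset.sum_apply, Finset.sum_apply,
          Finset.sum_eq_single_of_mem i (Finset.mem_univ i)]
        · simp [gam, Pi.smul_apply, smul_eq_mul, Pi.mul_apply, hteq i j]
        · intro b _ hb
          simp [gam, Pi.smul_apply, smul_eq_mul, Pi.mul_apply, Pi.single_eq_of_ne (Ne.symm hb)]
      rw [hc]
      exact Submodule.sum_mem _ fun i _ => Submodule.smul_mem _ _ (ht i)
  -- membership in the dual is componentwise
  have hmemD : ∀ s : Fin n → RR F, s ∈ galDualR (p ^ l) (C : Set (Fin n → RR F)) ↔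
      ∀ i, (fun j => s j i) ∈ galDualF (p ^ l) (compCode (C : Set (Fin n → RR F)) i) := by
    intro s
    constructor
    · intro hs i x hx
      obtain ⟨t, htC, hteq⟩ := hx
      have h0 := congrFun (hs t htC) i
      rw [Finset.sum_apply] at h0
      simp only [Pi.mul_apply, Pi.pow_apply, Pi.zero_apply] at h0
      simp only [← hteq]
      exact h0
    · intro hs t ht
      funext i
      rw [Finset.sum_apply]
      have := hs i (fun j => t j i) ⟨t, ht, fun j => rfl⟩
      simpa [Pi.mul_apply, Pi.pow_apply] using this
  rw [Set.eq_singleton_iff_unique_mem]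
  have h0mem : (0 : Fin n → RR F) ∈
      (C : Set (Fin n → RR F)) ∩ galDualR (p ^ l) (C : Set (Fin n → RR F)) := by
    refine ⟨C.zero_mem, ?_⟩
    intro t ht
    simp [zero_pow hppos]
  constructor
  · rintro ⟨-, huniq⟩ i
    rw [← fieldStep hp hl hcard (G i) (hGli i)]
    intro x hx hxd
    set c : Fin n → RR F := fun j => Pi.single i (x j) with hcdef
    have hcomp : ∀ i', (fun j => c j i') ∈ compCode (C : Set (Fin n → RR F)) i' := by
      intro i'
      by_cases h : i' = i
      · subst h
        have hxx : (fun j => c j i') = x := by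
          funext j; simp [hcdef, Pi.single_eq_same]
        rw [hxx, hC i']
        exact hx
      · have hxx : (fun j => c j i') = fun _ => (0 : F) := by
          funext j; simp [hcdef, Pi.single_eq_of_ne h]
        rw [hxx]
        refine ⟨0, C.zero_mem, fun j => ?_⟩
        simp
    have hcC : c ∈ C := (hmemC c).2 hcomp
    have hcD : c ∈ galDualR (p ^ l) (C : Set (Fin n → RR F)) := by
      rw [hmemD]
      intro i'
      by_cases h : i' = i
      · subst h
        have hxx : (fun j => c j i') = x := by
          funext j; simp [hcdef, Pi.single_eq_same]
        rw [hxx, hC i']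
        exact hxd
      · have hxx : (fun j => c j i') = fun _ => (0 : F) := by
          funext j; simp [hcdef, Pi.single_eq_of_ne h]
        rw [hxx]
        intro cc hcc
        simp [zero_pow hppos]
    have hc0 : c = 0 := huniq c ⟨hcC, hcD⟩
    funext j
    have := congrFun (congrFun hc0 j) i
    simpa [hcdef, Pi.single_eq_same] using this
  · intro hdet
    refine ⟨h0mem, ?_⟩
    rintro c ⟨hcC, hcD⟩
    funext j i
    have hx := (hmemC c).1 hcC i
    rw [hC i] at hx
    have hxd := (hmemD c).1 hcD i
    rw [hC i] at hxd
    have h0 := (fieldStep hp hl hcard (G i) (hGli i)).2 (hdet i) _ hx hxd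
    simpa using congrFun h0 j
end

section
/- For every linear code C of length n over R and every 0 ≤ l ≤ e−1, ρ(C^{⊥_l}) = ρ(C)^{⊥_l}, where ρ(C)^{⊥_l} is the l-Galois dual of the F_q-linear code ρ(C) ⊆ F_q^{4n}. -/
open scoped BigOperators

/-- `ρ(C^{⊥_l}) = ρ(C)^{⊥_l}`. -/
theorem statement9 {p e l n : ℕ} (hp : p.Prime) (he : 0 < e) (hl : l < e)
    (F : Type*) [Field F] [Fintype F] (hcard : Fintype.card F = p ^ e)
    (C : Submodule (RR F) (Fin n → RR F)) :
    gray '' galDualR (p ^ l) (C : Set (Fin n → RR F)) =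
      galDualF (p ^ l) (gray '' (C : Set (Fin n → RR F))) := by
  set pl := p ^ l
  ext x
  simp only [Set.mem_image, galDualR, galDualF, Set.mem_setOf_eq]
  constructor
  · rintro ⟨s, hs, rfl⟩ c ⟨t, ht, rfl⟩
    have h : ∀ i, ∑ j, t j i * s j i ^ pl = 0 := by
      intro i
      have := congrFun (hs t ht) i
      simpa [Finset.sum_apply, Pi.mul_apply, Pi.pow_apply] using this
    rw [Fintype.sum_prod_type, Finset.sum_comm]
    simp [gray, h]
  · intro hx
    refine ⟨fun j i => x (j, i), ?_, funext fun ji => rfl⟩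
    intro t ht
    funext i
    have h := hx (gray (gam F i • t)) ⟨gam F i • t, C.smul_mem _ ht, rfl⟩
    rw [Fintype.sum_prod_type] at h
    simp only [gray, Pi.smul_apply, smul_eq_mul, Pi.mul_apply, gam,
      Pi.single_apply, ite_mul, one_mul, zero_mul] at h
    simp only [Finset.sum_ite_eq', Finset.mem_univ, if_true] at h
    simpa [Finset.sum_apply, Pi.mul_apply, Pi.pow_apply] using h
end

section
/- Let C be a linear code of length n over R and 0 ≤ l ≤ e−1. Then C is an l-Galois LCD code over R if and only if ρ(C) is an l-Galois LCD code over F_q (as an F_q-linear code of length 4n). -/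
open scoped BigOperators

lemma gray_sum {F : Type*} [Field F] {n : ℕ} (pl : ℕ) (t c : Fin n → RR F) :
    ∑ ji : Fin n × Fin 4, gray t ji * gray c ji ^ pl
      = ∑ i : Fin 4, (∑ j, t j * c j ^ pl) i := by
  rw [Fintype.sum_prod_type, Finset.sum_comm]
  simp [gray, Finset.sum_apply]

/-- `C` is `l`-Galois LCD over `R` iff `ρ(C)` is `l`-Galois LCD over `F_q`. -/
theorem statement10 {p e l n : ℕ} (hp : p.Prime) (he : 0 < e) (hl : l < e)
    (F : Type*) [Field F] [Fintype F] (hcard : Fintype.card F = p ^ e)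
    (C : Submodule (RR F) (Fin n → RR F)) :
    (C : Set (Fin n → RR F)) ∩ galDualR (p ^ l) (C : Set (Fin n → RR F)) = {0} ↔
      gray '' (C : Set (Fin n → RR F)) ∩
        galDualF (p ^ l) (gray '' (C : Set (Fin n → RR F))) = {0} := by
  
  have hpl : p ^ l ≠ 0 := (pow_pos hp.pos l).ne'
  have hgray0 : gray (0 : Fin n → RR F) = 0 := rfl
  constructor
  · intro h
    ext x
    simp only [Set.mem_inter_iff, Set.mem_singleton_iff]
    constructor
    · rintro ⟨⟨c, hc, rfl⟩, hx⟩
      have hcd : c ∈ galDualR (p ^ l) (C : Set (Fin n → RR F)) := by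
        intro t ht
        funext i
        have ht' : (fun j => (Pi.single i (1:F) : RR F) * t j) ∈ (C : Set (Fin n → RR F)) := by
          have := C.smul_mem (Pi.single i (1:F) : RR F) ht
          exact this
        have hx' := hx _ ⟨_, ht', rfl⟩
        rw [gray_sum] at hx'
        have hrw : ∀ i' : Fin 4,
            (∑ j, ((fun j => (Pi.single i (1:F) : RR F) * t j) j) * c j ^ (p^l)) i'
              = (Pi.single i (1:F) : RR F) i' * (∑ j, t j * c j ^ (p^l)) i' := by
          intro i'
          simp [Finset.sum_apply, Finset.mul_sum, mul_assoc]
        rw [Finset.sum_congr rfl (fun i' _ => hrw i')] at hx'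
        simpa [Pi.single_apply] using hx'
      have hmem : c ∈ (C : Set (Fin n → RR F)) ∩ galDualR (p ^ l) (C : Set (Fin n → RR F)) :=
        ⟨hc, hcd⟩
      rw [h] at hmem
      simp only [Set.mem_singleton_iff] at hmem
      rw [hmem, hgray0]
    · rintro rfl
      refine ⟨⟨0, C.zero_mem, hgray0⟩, ?_⟩
      intro y hy
      simp [zero_pow hpl]
  · intro h
    ext c
    simp only [Set.mem_inter_iff, Set.mem_singleton_iff]
    constructor
    · rintro ⟨hc, hcd⟩
      have hg : gray c ∈ gray '' (C : Set (Fin n → RR F)) ∩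
          galDualF (p ^ l) (gray '' (C : Set (Fin n → RR F))) := by
        refine ⟨⟨c, hc, rfl⟩, ?_⟩
        rintro y ⟨t, ht, rfl⟩
        rw [gray_sum, hcd t ht]
        simp
      rw [h] at hg
      simp only [Set.mem_singleton_iff] at hg
      funext j
      funext i
      exact congrFun hg (j, i)
    · rintro rfl
      refine ⟨C.zero_mem, ?_⟩
      intro t ht
      simp [zero_pow hpl]
end

section
/- Let P be an m × m matrix over F_q and let t be an integer with 0 ≤ t ≤ m − 1 such that det(P_J) = 0 for every J ⊆ {1,…,m} with 0 ≤ |J| ≤ t. Then for every b ∈ F_q^m with support S and Hamming weight w satisfying 1 ≤ w ≤ t + 1, one has det(P + diag_m[b]) = (∏_{i∈S} b_i) · det(P_S). -/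
open scoped BigOperators

lemma detPiecewiseSingle {F : Type*} [Field F] {m : ℕ}
    (P : Matrix (Fin m) (Fin m) F) (J : Finset (Fin m)) :
    Matrix.det (Matrix.of (J.piecewise (fun i => Pi.single i (1:F)) P))
      = (P.submatrix (fun a : {i : Fin m // i ∉ J} => (a : Fin m))
          (fun a : {i : Fin m // i ∉ J} => (a : Fin m))).det := by
  rw [← Matrix.det_submatrix_equiv_self (Equiv.sumCompl (fun i => i ∈ J))]
  have h : (Matrix.of (J.piecewise (fun i => Pi.single i (1:F)) P)).submatrix
      (Equiv.sumCompl (fun i => i ∈ J)) (Equiv.sumCompl (fun i => i ∈ J)) =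
      Matrix.fromBlocks 1 0
        (P.submatrix (fun a : {i : Fin m // i ∉ J} => (a : Fin m))
          (fun a : {i : Fin m // i ∈ J} => (a : Fin m)))
        (P.submatrix (fun a : {i : Fin m // i ∉ J} => (a : Fin m))
          (fun a : {i : Fin m // i ∉ J} => (a : Fin m))) := by
    ext i j
    cases i with
    | inl i =>
      cases j with
      | inl j =>
        simp only [Matrix.submatrix, Finset.piecewise, i.2, Matrix.one_apply, Pi.single_apply,
          Subtype.ext_iff]
        by_cases h : i = j
        · subst h; simp [Finset.piecewise, i.2]
        · have h' : (j : Fin m) ≠ i := fun e => h (Subtype.ext e.symm)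
          simp [Finset.piecewise, i.2, h, h', Pi.single_apply, Matrix.one_apply]
      | inr j =>
        have : (j : Fin m) ≠ (i : Fin m) := by
          intro h; exact j.2 (h ▸ i.2)
        simp [Matrix.submatrix, Finset.piecewise, i.2, Pi.single_apply, this]
    | inr i =>
      cases j with
      | inl j => simp [Matrix.submatrix, Finset.piecewise, i.2]
      | inr j => simp [Matrix.submatrix, Finset.piecewise, i.2]
  rw [h, Matrix.det_fromBlocks_zero₁₂, Matrix.det_one, one_mul]

/-- the determinant lemma
`det(P + diag_m[b]) = (∏_{i∈S} b_i) · det(P_S)`. -/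
theorem statement11 {m t : ℕ} (F : Type*) [Field F] [Fintype F] [DecidableEq F]
    (P : Matrix (Fin m) (Fin m) F) (ht : t + 1 ≤ m)
    (hvanish : ∀ J : Finset (Fin m), J.card ≤ t → (minorOff P J).det = 0)
    (b : Fin m → F) (S : Finset (Fin m)) (hS : ∀ i, i ∈ S ↔ b i ≠ 0)
    (hw1 : 1 ≤ S.card) (hw2 : S.card ≤ t + 1) :
    (P + Matrix.diagonal b).det = (∏ i ∈ S, b i) * (minorOff P S).det := by
  simp only [minorOff] at hvanish ⊢
  have hdiag : ∀ i, Matrix.diagonal b i = b i • (Pi.single i (1:F) : Fin m → F) := by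
    intro i; funext j
    simp [Matrix.diagonal, Pi.single_apply, eq_comm]
  have key : (P + Matrix.diagonal b).det
      = ∑ s : Finset (Fin m), (∏ i ∈ s, b i) *
          (P.submatrix (fun a : {i : Fin m // i ∉ s} => (a : Fin m))
            (fun a : {i : Fin m // i ∉ s} => (a : Fin m))).det := by
    have h1 : (P + Matrix.diagonal b).det
        = Matrix.detRowAlternating
            ((Matrix.diagonal b : Fin m → Fin m → F) + (P : Fin m → Fin m → F)) := by
      rw [add_comm]; rfl
    rw [h1]
    show (Matrix.detRowAlternating (R := F) (n := Fin m)).toMultilinearMap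
        ((Matrix.diagonal b : Fin m → Fin m → F) + P) = _
    erw [MultilinearMap.map_add_univ]
    refine Finset.sum_congr rfl fun s _ => ?_
    have h2 : s.piecewise (Matrix.diagonal b : Fin m → Fin m → F) P
        = s.piecewise (fun i => b i • (s.piecewise (fun i => Pi.single i (1:F)) P) i)
            (s.piecewise (fun i => Pi.single i (1:F)) P) := by
      funext i
      by_cases hi : i ∈ s <;> simp [Finset.piecewise, hi, hdiag]
    show Matrix.detRowAlternating.toMultilinearMap _ = _
    rw [h2, (Matrix.detRowAlternating).toMultilinearMap.map_piecewise_smul]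
    rw [smul_eq_mul]
    congr 1
    exact detPiecewiseSingle P s
  rw [key]
  rw [Finset.sum_eq_single S]
  · intro s _ hne
    by_cases hsub : s ⊆ S
    · have hlt : s.card < S.card := Finset.card_lt_card (lt_of_le_of_ne hsub hne)
      have : s.card ≤ t := by omega
      rw [hvanish s this, mul_zero]
    · obtain ⟨i, his, hiS⟩ := Finset.not_subset.mp hsub
      have : b i = 0 := by
        by_contra h; exact hiS ((hS i).mpr h)
      rw [Finset.prod_eq_zero his this, zero_mul]
  · intro h; exact absurd (Finset.mem_univ S) h
end

section
/- Suppose q > 3. Let C be a linear code of length n over R. Then there exists α = (α_1,…,α_n) ∈ R^n with every α_j a unit of R such that C^α is a Euclidean LCD code over R; in particular |C^α| = |C| and, if C ≠ {0}, d_L(C^α) = d_L(C), so C^α is equivalent to C with the same parameters. -/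
open scoped BigOperators

open Matrix in
lemma det_affine {F : Type*} [CommRing F] {k : ℕ} (A : Matrix (Fin k) (Fin k) F)
    (u w : Fin k → F) :
    ∃ c : F, ∀ t : F,
      (Matrix.of fun r s => A r s + t * (u r * w s)).det = A.det + t * c := by
  classical
  set d : Fin k ⊕ Fin 1 → F := Sum.elim (fun r => -u r) (fun _ => 0) with hd
  set c0 : Fin k ⊕ Fin 1 → F := Sum.elim (fun _ => 0) (fun _ => 1) with hc0
  set N0 : Matrix (Fin k ⊕ Fin 1) (Fin k ⊕ Fin 1) F :=
    Matrix.fromBlocks A 0 (Matrix.of fun _ s => w s) 1 with hN0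
  refine ⟨(N0.updateCol (Sum.inr 0) d).det, fun t => ?_⟩
  have h1 : (Matrix.of fun r s => A r s + t * (u r * w s)) =
      A - (Matrix.of fun r (_ : Fin 1) => -(t * u r)) * (Matrix.of fun (_ : Fin 1) s => w s) := by
    ext r s
    simp [Matrix.mul_apply, Matrix.sub_apply]
    ring
  have h2 : N0.updateCol (Sum.inr 0) (c0 + t • d) =
      Matrix.fromBlocks A (Matrix.of fun r (_ : Fin 1) => -(t * u r))
        (Matrix.of fun (_ : Fin 1) s => w s) 1 := by
    ext i j
    rcases i with r | r <;> rcases j with s | s <;>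
      simp [Matrix.updateCol_apply, hc0, hd, hN0, Matrix.one_apply, Fin.eq_zero]
  have h3 : N0.updateCol (Sum.inr 0) c0 = N0 := by
    have : c0 = fun i => N0 i (Sum.inr 0) := by
      funext i; rcases i with r | r <;> simp [hc0, hN0, Fin.eq_zero]
    rw [this]
    exact Matrix.updateCol_eq_self _ _
  have h4 : N0.det = A.det := by
    rw [hN0, Matrix.det_fromBlocks_one₂₂, Matrix.zero_mul, sub_zero]
  rw [h1, ← Matrix.det_fromBlocks_one₂₂, ← h2, Matrix.det_updateCol_add,
    Matrix.det_updateCol_smul, h3, h4]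

lemma grid_lemma {F : Type*} [Field F] {n : ℕ} (P : (Fin n → F) → F)
    (haff : ∀ (j : Fin n) (b : Fin n → F), ∃ α β : F, ∀ t : F,
      P (Function.update b j t) = α + β * t)
    (T : Finset F) (hT : 2 ≤ T.card) (b0 : Fin n → F) (h0 : P b0 ≠ 0) :
    ∃ b : Fin n → F, (∀ j, b j ∈ T) ∧ P b ≠ 0 := by
  classical
  suffices h : ∀ S : Finset (Fin n), ∃ b : Fin n → F, (∀ j ∈ S, b j ∈ T) ∧ P b ≠ 0 by
    obtain ⟨b, hb1, hb2⟩ := h Finset.univ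
    exact ⟨b, fun j => hb1 j (Finset.mem_univ j), hb2⟩
  intro S
  induction S using Finset.induction_on with
  | empty => exact ⟨b0, by simp, h0⟩
  | @insert j S hj IH =>
    obtain ⟨b, hb1, hb2⟩ := IH
    obtain ⟨α, β, hαβ⟩ := haff j b
    obtain ⟨t1, ht1, t2, ht2, hne⟩ := Finset.one_lt_card.mp hT
    have key : ∃ t ∈ T, α + β * t ≠ 0 := by
      by_contra hcon
      push_neg at hcon
      have e1 := hcon t1 ht1
      have e2 := hcon t2 ht2
      have hβ : β = 0 := by
        have : β * (t1 - t2) = 0 := by ring_nf; linear_combination e1 - e2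
        rcases mul_eq_zero.mp this with h | h
        · exact h
        · exact absurd (sub_eq_zero.mp h) hne
      have hα : α = 0 := by simpa [hβ] using e1
      apply hb2
      have := hαβ (b j)
      rwa [Function.update_eq_self, hα, hβ, zero_mul, add_zero] at this
    obtain ⟨t, htT, htne⟩ := key
    refine ⟨Function.update b j t, ?_, by rw [hαβ t]; exact htne⟩
    intro j' hj'
    rcases Finset.mem_insert.mp hj' with rfl | hj'S
    · simpa using htT
    · have : j' ≠ j := by rintro rfl; exact hj hj'S
      rw [Function.update_of_ne this]
      exact hb1 j' hj'S

lemma two_le_card_squares {F : Type*} [Field F] [Fintype F] [DecidableEq F]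
    (hq : 3 < Fintype.card F) :
    2 ≤ ((Finset.univ.erase (0 : F)).image (fun a => a * a)).card := by
  classical
  have hfib : ∀ b ∈ (Finset.univ.erase (0 : F)).image (fun a => a * a),
      ((Finset.univ.erase (0 : F)).filter (fun a => a * a = b)).card ≤ 2 := by
    intro b hb
    obtain ⟨a, ha, rfl⟩ := Finset.mem_image.mp hb
    have hsub : (Finset.univ.erase (0 : F)).filter (fun x => x * x = a * a) ⊆ {a, -a} := by
      intro x hx
      have hxx : x * x = a * a := (Finset.mem_filter.mp hx).2
      have : (x - a) * (x + a) = 0 := by ring_nf; linear_combination hxx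
      rcases mul_eq_zero.mp this with h | h
      · simp [sub_eq_zero.mp h]
      · have : x = -a := by linear_combination h
        simp [this]
    calc ((Finset.univ.erase (0 : F)).filter (fun x => x * x = a * a)).card
        ≤ ({a, -a} : Finset F).card := Finset.card_le_card hsub
      _ ≤ 2 := Finset.card_insert_le _ _ |>.trans (by simp)
  have hcard := Finset.card_le_mul_card_image (Finset.univ.erase (0 : F)) 2 hfib
  have h1 : (Finset.univ.erase (0 : F)).card = Fintype.card F - 1 := by
    simp [Finset.card_erase_of_mem]
  omega

lemma keyField {F : Type*} [Field F] [Fintype F] [DecidableEq F]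
    (hq : 3 < Fintype.card F) {n : ℕ} (D : Submodule F (Fin n → F)) :
    ∃ a : Fin n → F, (∀ j, a j ≠ 0) ∧
      ∀ x ∈ D, (∀ y ∈ D, ∑ j, (a j * y j) * (a j * x j) = 0) → x = 0 := by
  classical
  set k := Module.finrank F D with hk
  let bD : Module.Basis (Fin k) F D := Module.finBasis F D
  set v : Fin k → (Fin n → F) := fun r => ((bD r : D) : Fin n → F) with hv_def
  have hvD : ∀ r, v r ∈ D := fun r => (bD r).2
  have hv : LinearIndependent F v := by
    have := bD.linearIndependent.map' D.subtype (Submodule.ker_subtype D)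
    exact this
  have hrepr : ∀ x ∈ D, ∃ c : Fin k → F, x = fun j => ∑ r, c r * v r j := by
    intro x hx
    refine ⟨fun r => bD.repr ⟨x, hx⟩ r, ?_⟩
    have h := bD.sum_repr ⟨x, hx⟩
    have h2 := congrArg (Subtype.val) h
    funext j
    have h3 := congrFun h2 j
    simp only [hv_def]
    simp only [Submodule.coe_sum, Finset.sum_apply, Submodule.coe_smul, Pi.smul_apply, smul_eq_mul] at h3
    exact h3.symm
  set M : (Fin n → F) → Matrix (Fin k) (Fin k) F :=
    fun b => Matrix.of fun r s => ∑ j, b j * (v r j * v s j) with hM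
  -- the key sum computation
  have hcomp : ∀ (b : Fin n → F) (c : Fin k → F) (s' : Fin k),
      (Matrix.vecMul c (M b)) s' = ∑ j, b j * ((∑ r, c r * v r j) * v s' j) := by
    intro b c s'
    have : (Matrix.vecMul c (M b)) s' = ∑ r, c r * ∑ j, b j * (v r j * v s' j) := by
      simp [Matrix.vecMul, dotProduct, hM]
    rw [this]
    calc ∑ r, c r * ∑ j, b j * (v r j * v s' j)
        = ∑ r, ∑ j, c r * (b j * (v r j * v s' j)) := by simp [Finset.mul_sum]
      _ = ∑ j, ∑ r, c r * (b j * (v r j * v s' j)) := Finset.sum_comm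
      _ = ∑ j, b j * ((∑ r, c r * v r j) * v s' j) := by
          refine Finset.sum_congr rfl fun j _ => ?_
          rw [Finset.sum_mul, Finset.mul_sum]
          exact Finset.sum_congr rfl fun r _ => by ring
  -- affineness in each coordinate
  have haff : ∀ (j0 : Fin n) (b : Fin n → F), ∃ α β : F, ∀ t : F,
      (M (Function.update b j0 t)).det = α + β * t := by
    intro j0 b
    have hsum : ∀ (t' : F) (r s : Fin k),
        ∑ j, (Function.update b j0 t') j * (v r j * v s j)
          = (∑ j ∈ Finset.univ.erase j0, b j * (v r j * v s j))
            + t' * (v r j0 * v s j0) := by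
      intro t' r s
      rw [← Finset.sum_erase_add _ _ (Finset.mem_univ j0), Function.update_self]
      congr 1
      exact Finset.sum_congr rfl fun j hj => by
        rw [Function.update_of_ne (Finset.ne_of_mem_erase hj)]
    obtain ⟨c, hc⟩ := det_affine (M (Function.update b j0 0))
      (fun r => v r j0) (fun s => v s j0)
    refine ⟨(M (Function.update b j0 0)).det, c, fun t => ?_⟩
    have heq : M (Function.update b j0 t) =
        Matrix.of fun r s => (M (Function.update b j0 0)) r s + t * (v r j0 * v s j0) := by
      ext r s
      show (∑ j, (Function.update b j0 t) j * (v r j * v s j)) = _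
      rw [hsum t r s]
      show _ = (∑ j, (Function.update b j0 0) j * (v r j * v s j)) + t * (v r j0 * v s j0)
      rw [hsum 0 r s]; ring
    rw [heq, hc t]; ring
  -- columns span everything
  set cols : Fin n → (Fin k → F) := fun j r => v r j with hcols
  have hspan : Submodule.span F (Set.range cols) = ⊤ := by
    have hA : LinearIndependent F (Matrix.of v) := hv
    have h1 : (Matrix.of v).rank = k := by
      rw [hA.rank_matrix, Fintype.card_fin]
    have h2 : (Matrix.of v).transpose.rank = k := by rw [Matrix.rank_transpose, h1]
    have h3 : Set.range (Matrix.of v).transpose = Set.range cols := by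
      congr 1
    have h4 : Module.finrank F (Submodule.span F (Set.range cols)) = k := by
      rw [← h3]; exact (Matrix.rank_eq_finrank_span_row _).symm.trans h2
    apply Submodule.eq_top_of_finrank_eq
    rw [h4, Module.finrank_pi, Fintype.card_fin]
  obtain ⟨S, hS_sub, hS_span, hS_ind⟩ := exists_linearIndependent F (Set.range cols)
  haveI : Fintype S := hS_ind.setFinite.fintype
  have hchoice : ∀ w : S, ∃ j, cols j = (w : Fin k → F) := fun w => hS_sub w.2
  set ch : S → Fin n := fun w => (hchoice w).choose with hch_def
  have hch : ∀ w : S, cols (ch w) = (w : Fin k → F) := fun w => (hchoice w).choose_spec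
  have hch_inj : Function.Injective ch := by
    intro w w' h
    have : cols (ch w) = cols (ch w') := by rw [h]
    rw [hch w, hch w'] at this
    exact Subtype.ext this
  set S0 : Finset (Fin n) := Finset.image ch Finset.univ with hS0
  set b0 : Fin n → F := fun j => if j ∈ S0 then (1 : F) else 0 with hb0
  have hdet0 : (M b0).det ≠ 0 := by
    intro hdet
    obtain ⟨c, hc0, hcv⟩ := Matrix.exists_vecMul_eq_zero_iff.mpr hdet
    set x : Fin n → F := fun j => ∑ r, c r * v r j with hx
    have key1 : ∀ s' : Fin k, ∑ j, b0 j * (x j * v s' j) = 0 := by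
      intro s'
      have := congrFun hcv s'
      rw [hcomp b0 c s'] at this
      simpa [hx] using this
    have key2 : ∑ j ∈ S0, x j • cols j = 0 := by
      funext s'
      have h5 : (∑ j ∈ S0, x j • cols j) s' = ∑ j ∈ S0, x j * v s' j := by
        simp [Finset.sum_apply, hcols]
      rw [Pi.zero_apply, h5]
      have h6 : ∑ j, b0 j * (x j * v s' j)
          = ∑ j ∈ S0, x j * v s' j := by
        rw [hb0]
        simp only [ite_mul, one_mul, zero_mul]
        rw [Finset.sum_ite_mem, Finset.univ_inter]
      rw [← h6, key1 s']
    have key3 : ∀ w : S, x (ch w) = 0 := by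
      have h7 : ∑ w : S, x (ch w) • (w : Fin k → F) = 0 := by
        rw [← key2, hS0, Finset.sum_image (fun a _ b _ h => hch_inj h)]
        exact Finset.sum_congr rfl fun w _ => by rw [hch w]
      exact fun w => (Fintype.linearIndependent_iff.mp hS_ind) (fun w => x (ch w)) h7 w
    -- the functional ∑ r, c r * · vanishes on a spanning set
    set φ : (Fin k → F) →ₗ[F] F := ∑ r, c r • LinearMap.proj r with hφ
    have hφ_apply : ∀ w, φ w = ∑ r, c r * w r := by
      intro w; simp [hφ]
    have hφ_ker : Submodule.span F S ≤ LinearMap.ker φ := by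
      rw [Submodule.span_le]
      intro w hw
      rw [SetLike.mem_coe, LinearMap.mem_ker, hφ_apply]
      have h8 : x (ch ⟨w, hw⟩) = ∑ r, c r * w r := by
        rw [hx]
        have := hch ⟨w, hw⟩
        simp only [hcols] at this
        exact Finset.sum_congr rfl fun r _ => by rw [← congrFun this r]
      rw [← h8]; exact key3 ⟨w, hw⟩
    rw [hS_span, hspan] at hφ_ker
    apply hc0
    funext r0
    have h9 : φ (Pi.single r0 1) = 0 := hφ_ker (Submodule.mem_top)
    rw [hφ_apply] at h9
    simpa [Pi.single_apply, Finset.sum_ite_eq] using h9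
  -- apply the grid lemma
  obtain ⟨b, hbT, hbdet⟩ := grid_lemma (fun b => (M b).det) haff
    ((Finset.univ.erase (0 : F)).image (fun a => a * a))
    (two_le_card_squares hq) b0 hdet0
  choose a ha1 ha2 using fun j => Finset.mem_image.mp (hbT j)
  refine ⟨a, fun j => Finset.ne_of_mem_erase (ha1 j), ?_⟩
  intro x hxD hortho
  obtain ⟨c, hxc⟩ := hrepr x hxD
  have hc : c = 0 := by
    by_contra hc0
    apply hbdet
    rw [← Matrix.exists_vecMul_eq_zero_iff]
    refine ⟨c, hc0, ?_⟩
    funext s'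
    rw [hcomp b c s', Pi.zero_apply]
    have h10 : ∀ j, b j * ((∑ r, c r * v r j) * v s' j)
        = (a j * v s' j) * (a j * x j) := by
      intro j
      rw [hxc]
      have : a j * a j = b j := ha2 j
      rw [← this]; ring
    rw [Finset.sum_congr rfl fun j _ => h10 j]
    exact hortho (v s') (hvD s')
  rw [hxc, hc]
  funext j; simp

/-- for `q > 3`, every linear code `C` over `R` is equivalent
(via scaling by a vector of units) to a Euclidean LCD code `C^α` with the same
cardinality and the same minimum Lee distance. -/
theorem statement13 {p e n : ℕ} (hp : p.Prime) (he : 0 < e)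
    (F : Type*) [Field F] [Fintype F] [DecidableEq F] (hcard : Fintype.card F = p ^ e)
    (hq : 3 < Fintype.card F)
    (C : Submodule (RR F) (Fin n → RR F)) :
    ∃ α : Fin n → RR F, (∀ j, IsUnit (α j)) ∧
      scaleCode α (C : Set (Fin n → RR F)) ∩
        euclDualR (scaleCode α (C : Set (Fin n → RR F))) = {0} ∧
      Nat.card (scaleCode α (C : Set (Fin n → RR F))) = Nat.card C ∧
      ((C : Set (Fin n → RR F)) ≠ {0} →
        dLee (scaleCode α (C : Set (Fin n → RR F))) = dLee (C : Set (Fin n → RR F))) := by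
  classical
  -- the component codes over F
  let Dc : Fin 4 → Submodule F (Fin n → F) := fun i =>
    { carrier := {x | ∃ c ∈ C, ∀ j, c j i = x j}
      add_mem' := by
        rintro x y ⟨c, hc, hcx⟩ ⟨d, hd, hdx⟩
        exact ⟨c + d, C.add_mem hc hd, fun j => by
          simp [Pi.add_apply, hcx j, hdx j]⟩
      zero_mem' := ⟨0, C.zero_mem, fun j => rfl⟩
      smul_mem' := by
        rintro t x ⟨c, hc, hcx⟩
        refine ⟨(fun _ => t : RR F) • c, C.smul_mem _ hc, fun j => ?_⟩
        have : ((fun _ => t : RR F) • c) j i = t * c j i := rfl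
        rw [this, hcx j]; rfl }
  choose a ha0 hakey using fun i : Fin 4 => keyField hq (Dc i)
  set α : Fin n → RR F := fun j i => a i j with hα
  have hne : ∀ (j : Fin n) (i : Fin 4), α j i ≠ 0 := fun j i => ha0 i j
  have hαu : ∀ j, IsUnit (α j) := by
    intro j
    refine IsUnit.of_mul_eq_one (fun i => (α j i)⁻¹) ?_
    funext i
    exact mul_inv_cancel₀ (hne j i)
  have hinj : Function.Injective (fun c : Fin n → RR F => fun j => α j * c j) := by
    intro c d h
    funext j i
    have h1 := congrFun (congrFun h j) i
    exact mul_left_cancel₀ (hne j i) h1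
  refine ⟨α, hαu, ?_, ?_, ?_⟩
  · -- LCD
    apply Set.Subset.antisymm
    · rintro z ⟨hz1, hz2⟩
      obtain ⟨c, hcC, rfl⟩ := hz1
      have hzero : ∀ i : Fin 4, (fun j => c j i) = 0 := by
        intro i
        apply hakey i (fun j => c j i) ⟨c, hcC, fun j => rfl⟩
        rintro y ⟨t, htC, hti⟩
        have hmem : (fun j => α j * t j) ∈ scaleCode α (C : Set (Fin n → RR F)) :=
          ⟨t, htC, rfl⟩
        have hd := hz2 _ hmem
        have hdi := congrFun hd i
        rw [Finset.sum_apply] at hdi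
        rw [show (0 : RR F) i = 0 from rfl] at hdi
        rw [← hdi]
        refine Finset.sum_congr rfl fun j _ => ?_
        have : ((α j * t j) * (α j * c j)) i = (α j i * t j i) * (α j i * c j i) := rfl
        rw [this, hti j]
      rw [Set.mem_singleton_iff]
      funext j i
      show α j i * c j i = 0
      have h2 := congrFun (hzero i) j
      simp only [Pi.zero_apply] at h2
      rw [h2, mul_zero]
    · intro z hz
      rw [Set.mem_singleton_iff] at hz
      subst hz
      constructor
      · exact ⟨0, C.zero_mem, by funext j; simp⟩
      · intro t _
        simp
  · -- cardinality
    exact Nat.card_image_of_injective hinj _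
  · -- Lee distance
    intro _
    have hlee : ∀ c : Fin n → RR F, leeWt (fun j => α j * c j) = leeWt c := by
      intro c
      unfold leeWt
      refine Finset.sum_congr rfl fun j _ => ?_
      unfold hammingNorm
      congr 1
      apply Finset.filter_congr
      intro i _
      show α j i * c j i ≠ 0 ↔ c j i ≠ 0
      simp [hne j i]
    unfold dLee
    congr 1
    apply Set.Subset.antisymm
    · rintro w ⟨z, ⟨hz1, hz2⟩, rfl⟩
      obtain ⟨c, hcC, rfl⟩ := hz1
      refine ⟨c, ⟨hcC, ?_⟩, (hlee c).symm ▸ rfl⟩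
      rintro rfl
      apply hz2
      funext j; simp
    · rintro w ⟨c, ⟨hcC, hc0⟩, rfl⟩
      refine ⟨fun j => α j * c j, ⟨⟨c, hcC, rfl⟩, ?_⟩, hlee c⟩
      intro h0
      apply hc0
      apply hinj
      show (fun j => α j * c j) = fun j => α j * (0 : Fin n → RR F) j
      rw [h0]
      funext j; simp
end

section
/- Let 0 < l < e and suppose p^{e−l} + 1 divides p^e − 1; set β = (p^e − 1)/(p^{e−l} + 1) and (F_q^*)^β = {x^β : x ∈ F_q^*}. Let C ⊆ F_q^n be a linear code of dimension k with generator matrix G = [I_k : M] in standard form (a k × n matrix of rank k whose rows form a basis of C), and set P = G(F^{e−l}(G))^T, where F^{e−l}(G) is the entrywise p^{e−l}-th power of G. Let t be an integer with 0 ≤ t ≤ k − 1 such that det(P_I) = 0 for every I ⊆ {1,…,k} with 0 ≤ |I| ≤ t, and suppose there exists J ⊆ {1,…,k} with |J| = t + 1 and det(P_J) ≠ 0. Let a ∈ F_q^n satisfy a_j ∈ F_q \ (F_q^*)^β for j ∈ J and a_j ∈ (F_q^*)^β for j ∈ {1,…,n} \ J. Then C^a is an l-Galois LCD code over F_q. 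-/
open scoped BigOperators

section aux
open Matrix

/-- rows in S replaced by standard basis vectors -/
def replE {F : Type*} [Field F] {m : ℕ} (A : Matrix (Fin m) (Fin m) F) (S : Finset (Fin m)) :
    Matrix (Fin m) (Fin m) F :=
  Matrix.of fun i => if i ∈ S then Pi.single i 1 else A i

lemma replE_det {F : Type*} [Field F] {m : ℕ} (A : Matrix (Fin m) (Fin m) F)
    (S : Finset (Fin m)) : (replE A S).det = (minorOff A S).det := by
  rw [← Matrix.det_submatrix_equiv_self (Equiv.sumCompl (· ∈ S)) (replE A S)]
  have h : (replE A S).submatrix (Equiv.sumCompl (· ∈ S)) (Equiv.sumCompl (· ∈ S)) =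
      Matrix.fromBlocks 1 0
        (A.submatrix (fun a : {i : Fin m // i ∉ S} => (a : Fin m))
          (fun a : {i : Fin m // i ∈ S} => (a : Fin m))) (minorOff A S) := by
    ext i j
    cases i with
    | inl i =>
      cases j with
      | inl j =>
        simp only [replE, Equiv.sumCompl, Matrix.submatrix_apply, Equiv.coe_fn_mk, Sum.elim_inl,
          Matrix.of_apply, i.2, if_true, Matrix.fromBlocks_apply₁₁]
        rw [Pi.single_apply, Matrix.one_apply]
        by_cases hij : i = j
        · subst hij; simp
        · rw [if_neg hij, if_neg (fun h => hij (Subtype.ext h.symm))]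
      | inr j =>
        have : (j : Fin m) ≠ (i : Fin m) := by
          intro h; exact j.2 (h ▸ i.2)
        simp [replE, Equiv.sumCompl, i.2, Pi.single_apply, this]
    | inr i =>
      cases j with
      | inl j => simp [replE, Equiv.sumCompl, i.2, minorOff]
      | inr j => simp [replE, Equiv.sumCompl, i.2, minorOff]
  rw [h, Matrix.det_fromBlocks_zero₁₂, Matrix.det_one, one_mul]

lemma det_expand {F : Type*} [Field F] {m : ℕ} (d : Fin m → F) (T : Finset (Fin m)) :
    ∀ A : Matrix (Fin m) (Fin m) F,
    (Matrix.of fun i => if i ∈ T then A i + d i • (Pi.single i 1 : Fin m → F) else A i).det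
      = ∑ S ∈ T.powerset, (∏ s ∈ S, d s) * (replE A S).det := by
  classical
  induction T using Finset.induction_on with
  | empty =>
    intro A
    have h1 : (Matrix.of fun i => if i ∈ (∅ : Finset (Fin m)) then A i + d i • (Pi.single i 1 : Fin m → F) else A i) = A := by
      ext i j; simp
    have h2 : replE A ∅ = A := by ext i j; simp [replE]
    rw [h1]; simp [h2]
  | @insert s T hs ih =>
    intro A
    have key : (Matrix.of fun i => if i ∈ insert s T then A i + d i • (Pi.single i 1 : Fin m → F) else A i) =
        (Matrix.of fun i => if i ∈ T then A i + d i • (Pi.single i 1 : Fin m → F) else A i).updateRow s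
          (A s + d s • (Pi.single s 1 : Fin m → F)) := by
      ext i j
      by_cases h : i = s
      · subst h; simp [hs]
      · simp [Matrix.updateRow_ne h, Finset.mem_insert, h, Matrix.of_apply]
    have base : (Matrix.of fun i => if i ∈ T then A i + d i • (Pi.single i 1 : Fin m → F) else A i) s = A s := by
      funext j; simp [hs]
    rw [key, Matrix.det_updateRow_add, Matrix.det_updateRow_smul, ← base,
      Matrix.updateRow_eq_self]
    have upd : (Matrix.of fun i => if i ∈ T then A i + d i • (Pi.single i 1 : Fin m → F) else A i).updateRow s
          ((Pi.single s 1 : Fin m → F)) =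
        (Matrix.of fun i => if i ∈ T then (A.updateRow s ((Pi.single s 1 : Fin m → F))) i + d i • (Pi.single i 1 : Fin m → F)
          else (A.updateRow s ((Pi.single s 1 : Fin m → F))) i) := by
      ext i j
      by_cases h : i = s
      · subst h; simp [hs]
      · simp [Matrix.updateRow_ne h, h]
    rw [upd, ih, ih, Finset.sum_powerset_insert hs]
    congr 1
    rw [Finset.mul_sum]
    refine Finset.sum_congr rfl fun S hS => ?_
    have hsS : s ∉ S := fun h => hs (Finset.mem_powerset.mp hS h)
    have hrepl : replE (A.updateRow s ((Pi.single s 1 : Fin m → F))) S = replE A (insert s S) := by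
      ext i j
      by_cases h : i = s
      · subst h; simp [replE, hsS]
      · simp [replE, Matrix.updateRow_ne h, Finset.mem_insert, h]
    rw [hrepl, Finset.prod_insert hsS]
    ring

lemma root_is_pow {F : Type*} [Field F] [Fintype F] {β m : ℕ} (hm : 0 < m)
    (hN : β * m = Fintype.card F - 1) {y : F} (hy : y ≠ 0) (h : y ^ m = 1) :
    ∃ x : F, x ≠ 0 ∧ x ^ β = y := by
  classical
  set u : Fˣ := Units.mk0 y hy with hu
  obtain ⟨g, hg⟩ := IsCyclic.exists_generator (α := Fˣ)
  have hcard : orderOf g = Fintype.card F - 1 := by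
    rw [orderOf_eq_card_of_forall_mem_zpowers hg, Nat.card_eq_fintype_card,
      Fintype.card_units]
  obtain ⟨j, hj⟩ := hg u
  simp only [] at hj
  have hum : u ^ m = 1 := by
    ext
    push_cast [hu]
    exact h
  have : g ^ (j * (m : ℤ)) = 1 := by
    rw [_root_.zpow_mul, hj, zpow_natCast, hum]
  have hdvd : ((Fintype.card F - 1 : ℕ) : ℤ) ∣ j * (m : ℤ) := by
    rw [← hcard]
    exact orderOf_dvd_iff_zpow_eq_one.mpr this
  rw [← hN] at hdvd
  push_cast at hdvd
  have hβdvd : (β : ℤ) ∣ j := by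
    rcases hdvd with ⟨c, hc⟩
    refine ⟨c, ?_⟩
    have hm' : (m : ℤ) ≠ 0 := by exact_mod_cast hm.ne'
    have : j * (m : ℤ) = (β * c) * m := by rw [hc]; ring
    exact mul_right_cancel₀ hm' this
  obtain ⟨i, hi⟩ := hβdvd
  refine ⟨((g ^ i : Fˣ) : F), Units.ne_zero _, ?_⟩
  have : ((g ^ i) ^ β : Fˣ) = u := by
    rw [← zpow_natCast (g ^ i) β, ← _root_.zpow_mul, mul_comm, ← hi, hj]
  calc ((g ^ i : Fˣ) : F) ^ β = (((g ^ i) ^ β : Fˣ) : F) := by push_cast; ring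
    _ = y := by rw [this]; simp [hu]

end aux

open Matrix in
/-- construction of `l`-Galois LCD codes `C^a` over `F_q` from a linear
code with generator matrix `G = [I_k : M]`, where `P = G(F^{e−l}(G))ᵀ`,
`β = (p^e − 1)/(p^{e−l} + 1)` and `(F_q^*)^β = {x^β : x ≠ 0}`. -/
theorem statement14 {p e l n k t : ℕ} (hp : p.Prime) (hl0 : 0 < l) (hle : l < e)
    (F : Type*) [Field F] [Fintype F] (hcard : Fintype.card F = p ^ e)
    (hdvd : p ^ (e - l) + 1 ∣ p ^ e - 1)
    (β : ℕ) (hβ : β = (p ^ e - 1) / (p ^ (e - l) + 1))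
    (hkn : k ≤ n) (G : Matrix (Fin k) (Fin n) F)
    -- the rows of `G` form a basis of `C` (`G` has rank `k`):
    (hGli : LinearIndependent F (fun r : Fin k => G r))
    -- standard form `G = [I_k : M]`:
    (hstd : ∀ r s : Fin k, G r (Fin.castLE hkn s) = if r = s then 1 else 0)
    (ht : t + 1 ≤ k)
    (hvanish : ∀ I : Finset (Fin k), I.card ≤ t →
      (minorOff (G * (G.map (fun x => x ^ p ^ (e - l)))ᵀ) I).det = 0)
    (J : Finset (Fin k)) (hJcard : J.card = t + 1)
    (hJdet : (minorOff (G * (G.map (fun x => x ^ p ^ (e - l)))ᵀ) J).det ≠ 0)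
    (a : Fin n → F)
    -- `a_j ∈ F_q \ (F_q^*)^β` for `j ∈ J`:
    (ha1 : ∀ s ∈ J, ¬ ∃ x : F, x ≠ 0 ∧ x ^ β = a (Fin.castLE hkn s))
    -- `a_j ∈ (F_q^*)^β` for `j ∉ J`:
    (ha2 : ∀ j : Fin n, (∀ s ∈ J, Fin.castLE hkn s ≠ j) → ∃ x : F, x ≠ 0 ∧ x ^ β = a j) :
    scaleCodeF a (Submodule.span F (Set.range (fun r : Fin k => G r)) : Set (Fin n → F)) ∩
      galDualF (p ^ l)
        (scaleCodeF a (Submodule.span F (Set.range (fun r : Fin k => G r)) : Set (Fin n → F)))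
      = {0} := by
  classical
  have hppos : 0 < p := hp.pos
  set pel := p ^ (e - l) with hpel
  set pl := p ^ l with hpl
  have hpelpos : 0 < pel := pow_pos hppos _
  have hplpos : 0 < pl := pow_pos hppos _
  have hple : pl * pel = p ^ e := by
    rw [hpl, hpel, ← pow_add]; congr 1; omega
  have hepos : 0 < e := lt_trans hl0 hle
  -- characteristic
  have hcharP : CharP F p := by
    have h1 : ((p : F)) ^ e = 0 := by
      rw [← Nat.cast_pow, ← hcard]; exact Nat.cast_card_eq_zero F
    have hpF : (p : F) = 0 := pow_eq_zero_iff hepos.ne' |>.mp h1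
    have hd := ringChar.dvd hpF
    rcases hp.eq_one_or_self_of_dvd _ hd with h | h
    · exfalso
      have := CharP.cast_eq_zero F (ringChar F)
      rw [h] at this
      simpa using this
    · rw [← h]; exact ringChar.charP F
  haveI := hcharP
  haveI : ExpChar F p := ExpChar.prime hp
  have hβm : β * (pel + 1) = p ^ e - 1 := by
    rw [hβ]
    exact Nat.div_mul_cancel hdvd
  have hcard1 : Fintype.card F - 1 = p ^ e - 1 := by rw [hcard]
  -- the diagonal correction
  set b : Fin n → F := fun j => a j * a j ^ pel with hb
  have hb1 : ∀ j : Fin n, (∀ s ∈ J, Fin.castLE hkn s ≠ j) → b j = 1 := by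
    intro j hj
    obtain ⟨x, hx0, hxa⟩ := ha2 j hj
    have : b j = a j ^ (pel + 1) := by rw [hb]; ring
    rw [this, ← hxa, ← pow_mul, hβm, ← hcard1]
    exact FiniteField.pow_card_sub_one_eq_one x hx0
  have hb2 : ∀ s ∈ J, b (Fin.castLE hkn s) ≠ 1 := by
    intro s hs hbone
    have ha0 : a (Fin.castLE hkn s) ≠ 0 := by
      intro h0
      rw [hb] at hbone
      simp only [h0] at hbone
      simp at hbone
    have hpow : a (Fin.castLE hkn s) ^ (pel + 1) = 1 := by
      rw [← hbone, hb]; ring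
    exact ha1 s hs (root_is_pow (Nat.succ_pos pel) (by rw [hcard1]; exact hβm) ha0 hpow)
  set Ga : Matrix (Fin k) (Fin n) F := Matrix.of fun r j => a j * G r j with hGa
  set P : Matrix (Fin k) (Fin k) F := G * (G.map (fun x => x ^ pel))ᵀ with hPdef
  set Pa : Matrix (Fin k) (Fin k) F := Ga * (Ga.map (fun x => x ^ pel))ᵀ with hPadef
  set Q : Matrix (Fin k) (Fin k) F := Ga * (Ga.map (fun x => x ^ pl))ᵀ with hQdef
  set d : Fin k → F := fun u => if u ∈ J then b (Fin.castLE hkn u) - 1 else 0 with hd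
  -- Pa = P + diagonal d
  have hPaP : Pa = P + Matrix.diagonal d := by
    ext r s
    have hterm : ∀ j : Fin n, Ga r j * (Ga s j) ^ pel
        = G r j * (G s j) ^ pel + (b j - 1) * (G r j * (G s j) ^ pel) := by
      intro j
      simp only [hGa, Matrix.of_apply, hb]
      rw [mul_pow]
      ring
    have hPa_rs : Pa r s = ∑ j, Ga r j * (Ga s j) ^ pel := by
      simp [hPadef, Matrix.mul_apply, Matrix.transpose_apply, Matrix.map_apply]
    have hP_rs : P r s = ∑ j, G r j * (G s j) ^ pel := by
      simp [hPdef, Matrix.mul_apply, Matrix.transpose_apply, Matrix.map_apply]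
    rw [Matrix.add_apply, hPa_rs, hP_rs]
    have : ∑ j, Ga r j * (Ga s j) ^ pel
        = ∑ j, (G r j * (G s j) ^ pel + (b j - 1) * (G r j * (G s j) ^ pel)) :=
      Finset.sum_congr rfl fun j _ => hterm j
    rw [this, Finset.sum_add_distrib]
    congr 1
    -- correction sum equals diagonal entry
    have hsub : ∑ j, (b j - 1) * (G r j * (G s j) ^ pel)
        = ∑ j ∈ J.map (Fin.castLEEmb hkn), (b j - 1) * (G r j * (G s j) ^ pel) := by
      refine (Finset.sum_subset (Finset.subset_univ _) ?_).symm
      intro j _ hj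
      have : ∀ s' ∈ J, Fin.castLE hkn s' ≠ j := by
        intro s' hs' hcontra
        exact hj (Finset.mem_map.mpr ⟨s', hs', hcontra⟩)
      rw [hb1 j this, sub_self, zero_mul]
    rw [hsub, Finset.sum_map]
    have hterm2 : ∀ u ∈ J, (b (Fin.castLEEmb hkn u) - 1) *
        (G r (Fin.castLEEmb hkn u) * (G s (Fin.castLEEmb hkn u)) ^ pel)
        = if u = r ∧ u = s then b (Fin.castLE hkn u) - 1 else 0 := by
      intro u _
      have hcoe : (Fin.castLEEmb hkn) u = Fin.castLE hkn u := rfl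
      rw [hcoe, hstd r u, hstd s u]
      by_cases h1 : u = r <;> by_cases h2 : u = s
      · subst h1; subst h2; simp
      · subst h1; simp [h2, Ne.symm h2, zero_pow hpelpos.ne']
      · subst h2; simp [h1, Ne.symm h1]
      · simp [h1, h2, Ne.symm h1, zero_pow hpelpos.ne']
    rw [Finset.sum_congr rfl hterm2]
    by_cases hrs : r = s
    · subst hrs
      have : ∀ u, (u = r ∧ u = r) = (u = r) := by intro u; simp
      simp only [and_self]
      rw [Finset.sum_ite_eq' J r (fun u => b (Fin.castLE hkn u) - 1)]
      rw [Matrix.diagonal_apply_eq, hd]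
    · have : ∀ u ∈ J, (if u = r ∧ u = s then b (Fin.castLE hkn u) - 1 else 0) = 0 := by
        intro u _
        rw [if_neg]
        rintro ⟨h1, h2⟩
        exact hrs (h1 ▸ h2)
      rw [Finset.sum_congr rfl this, Finset.sum_const_zero, Matrix.diagonal_apply_ne _ hrs]
  -- det Pa ≠ 0
  have hdetPa : Pa.det ≠ 0 := by
    have hform : Pa = Matrix.of fun i =>
        if i ∈ (Finset.univ : Finset (Fin k)) then P i + d i • (Pi.single i 1 : Fin k → F)
        else P i := by
      rw [hPaP]
      ext i j
      simp [Matrix.diagonal_apply, Pi.single_apply, eq_comm]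
    rw [hform, det_expand]
    have hJmem : J ∈ (Finset.univ : Finset (Fin k)).powerset :=
      Finset.mem_powerset.mpr (Finset.subset_univ _)
    rw [Finset.sum_eq_single_of_mem J hJmem]
    · rw [replE_det]
      refine mul_ne_zero ?_ hJdet
      refine Finset.prod_ne_zero_iff.mpr fun u hu => ?_
      rw [hd]
      simp only [hu, if_true]
      exact sub_ne_zero_of_ne (hb2 u hu)
    · intro S _ hSJ
      by_cases hsub : S ⊆ J
      · have hlt : S.card < J.card := Finset.card_lt_card (lt_of_le_of_ne hsub hSJ)
        have : S.card ≤ t := by omega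
        rw [replE_det, hvanish S this, mul_zero]
      · obtain ⟨u, huS, huJ⟩ := Finset.not_subset.mp hsub
        have : d u = 0 := by rw [hd]; simp [huJ]
        rw [Finset.prod_eq_zero huS this, zero_mul]
  -- det Q ≠ 0
  have hQmap : Q.map (iterateFrobenius F p (e - l)) = Paᵀ := by
    ext r s
    have hQ_rs : Q r s = ∑ j, Ga r j * (Ga s j) ^ pl := by
      simp [hQdef, Matrix.mul_apply, Matrix.transpose_apply, Matrix.map_apply]
    have hPa_sr : Pa s r = ∑ j, Ga s j * (Ga r j) ^ pel := by
      simp [hPadef, Matrix.mul_apply, Matrix.transpose_apply, Matrix.map_apply]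
    rw [Matrix.map_apply, Matrix.transpose_apply, hQ_rs, hPa_sr, map_sum]
    refine Finset.sum_congr rfl fun j _ => ?_
    have step : (iterateFrobenius F p (e - l)) (Ga r j * Ga s j ^ pl)
        = Ga r j ^ pel * Ga s j ^ (pel * pl) := by
      rw [_root_.map_mul, map_pow, iterateFrobenius_def, iterateFrobenius_def, ← pow_mul,
        ← hpel]
    rw [step, mul_comm pel pl, hple, ← hcard, FiniteField.pow_card]
    exact mul_comm _ _
  have hdetQ : Q.det ≠ 0 := by
    intro h0
    have h1 : (iterateFrobenius F p (e - l)) Q.det = Paᵀ.det := by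
      rw [RingHom.map_det, RingHom.mapMatrix_apply, hQmap]
    rw [h0, map_zero] at h1
    rw [Matrix.det_transpose] at h1
    exact hdetPa h1.symm
  have hQunit : IsUnit Q.det := isUnit_iff_ne_zero.mpr hdetQ
  -- main argument
  ext v
  simp only [Set.mem_inter_iff, Set.mem_singleton_iff]
  constructor
  · rintro ⟨⟨c, hc, hcv⟩, hv2⟩
    obtain ⟨y, hy⟩ := (Submodule.mem_span_range_iff_exists_fun F).mp hc
    have hv : ∀ j, v j = ∑ r, y r * Ga r j := by
      intro j
      rw [← hcv]
      simp only
      rw [← hy]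
      simp only [Finset.sum_apply, Pi.smul_apply, smul_eq_mul, Finset.mul_sum, hGa,
        Matrix.of_apply]
      exact Finset.sum_congr rfl fun r _ => by ring
    have hrow : ∀ r : Fin k, ∑ j, Ga r j * v j ^ pl = 0 := by
      intro r
      have hmem : (fun j => a j * G r j) ∈ scaleCodeF a
          (Submodule.span F (Set.range (fun r : Fin k => G r)) : Set (Fin n → F)) :=
        ⟨G r, Submodule.subset_span ⟨r, rfl⟩, rfl⟩
      exact hv2 _ hmem
    set w : Fin k → F := fun r => y r ^ pl with hw
    have hvpl : ∀ j, v j ^ pl = ∑ s, w s * Ga s j ^ pl := by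
      intro j
      rw [hv j]
      have hfrob : (∑ r, y r * Ga r j) ^ pl = ∑ r, (y r * Ga r j) ^ pl := by
        rw [hpl]
        exact sum_pow_char_pow (p := p) (n := l) Finset.univ fun r => y r * Ga r j
      rw [hfrob]
      exact Finset.sum_congr rfl fun s _ => by rw [mul_pow, hw]
    have hQw : Q.mulVec w = 0 := by
      funext r
      have h1 : Q.mulVec w r = ∑ s, (∑ j, Ga r j * Ga s j ^ pl) * w s := by
        simp [Matrix.mulVec, dotProduct, hQdef, Matrix.mul_apply, Matrix.transpose_apply,
          Matrix.map_apply]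
      rw [h1]
      have h2 : ∑ s, (∑ j, Ga r j * Ga s j ^ pl) * w s
          = ∑ j, Ga r j * (∑ s, w s * Ga s j ^ pl) :=
        calc ∑ s, (∑ j, Ga r j * Ga s j ^ pl) * w s
            = ∑ s, ∑ j, Ga r j * (w s * Ga s j ^ pl) := by
              refine Finset.sum_congr rfl fun s _ => ?_
              rw [Finset.sum_mul]
              exact Finset.sum_congr rfl fun j _ => by ring
          _ = ∑ j, ∑ s, Ga r j * (w s * Ga s j ^ pl) := Finset.sum_comm
          _ = ∑ j, Ga r j * (∑ s, w s * Ga s j ^ pl) := by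
              refine Finset.sum_congr rfl fun j _ => ?_
              rw [Finset.mul_sum]
      rw [h2]
      have h3 : ∑ j, Ga r j * (∑ s, w s * Ga s j ^ pl) = ∑ j, Ga r j * v j ^ pl := by
        refine Finset.sum_congr rfl fun j _ => ?_
        rw [← hvpl j]
      rw [h3, hrow r]
      rfl
    have hw0 : w = 0 := by
      have h4 := congrArg (fun z => Q⁻¹.mulVec z) hQw
      simpa [Matrix.mulVec_mulVec, Matrix.nonsing_inv_mul Q hQunit, Matrix.one_mulVec,
        Matrix.mulVec_zero] using h4
    have hy0 : ∀ r, y r = 0 := by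
      intro r
      have : y r ^ pl = 0 := by
        have := congrFun hw0 r
        simpa [hw] using this
      exact (pow_eq_zero_iff hplpos.ne').mp this
    funext j
    rw [hv j]
    simp [hy0]
  · rintro rfl
    refine ⟨⟨0, Submodule.zero_mem _, by funext j; simp⟩, ?_⟩
    intro c hc
    simp [galDualF, zero_pow hplpos.ne']
end

section
/- Let 0 < l < e, suppose p^{e−l} + 1 divides p^e − 1, set β = (p^e − 1)/(p^{e−l} + 1) and (F_q^*)^β = {x^β : x ∈ F_q^*}. Let C = γ_1C_1 ⊕ γ_2C_2 ⊕ γ_3C_3 ⊕ γ_4C_4 be a linear code of length n over R whose component codes C_i have generator matrices G_i = [I_{k_i} : M_i] in standard form (k_i × n matrices of rank k_i whose rows form a basis of C_i). Set P_i = G_i(F^{e−l}(G_i))^T, where F^{e−l}(G_i) is the entrywise p^{e−l}-th power of G_i. Suppose for each i = 1,2,3,4 there is an integer t_i with 0 ≤ t_i ≤ k_i − 1 such that det((P_i)_{S_i}) = 0 for every S_i ⊆ {1,…,k_i} with 0 ≤ |S_i| ≤ t_i, and there exists R_i ⊆ {1,…,k_i} with |R_i| = t_i + 1 and det((P_i)_{R_i})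 ≠ 0. Let α = (α_1,…,α_n) ∈ R^n, with α_j = Σ_{i=1}^4 γ_i α_{ji}, satisfy α_{ji} ∈ F_q \ (F_q^*)^β for j ∈ R_i and α_{ji} ∈ (F_q^*)^β for j ∈ {1,…,n} \ R_i, for each i = 1,2,3,4. Then C^α is an l-Galois LCD code over R. -/
open scoped BigOperators

lemma detPiecewiseSingle_s15 {F : Type*} [Field F] {k : ℕ} (P : Matrix (Fin k) (Fin k) F)
    (S : Finset (Fin k)) :
    Matrix.det (S.piecewise (fun r => Pi.single r (1:F)) P) = (minorOff P S).det := by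
  classical
  set Q : Matrix (Fin k) (Fin k) F := S.piecewise (fun r => Pi.single r (1:F)) P with hQ
  have h := Matrix.det_submatrix_equiv_self (Equiv.sumCompl (· ∈ S)) Q
  rw [← h]
  have hblock : Q.submatrix (Equiv.sumCompl (· ∈ S)) (Equiv.sumCompl (· ∈ S))
      = Matrix.fromBlocks 1 0 (Matrix.of fun a b => Q a.val b.val) (minorOff P S) := by
    ext i j
    rcases i with i | i <;> rcases j with j | j
    · show (S.piecewise (fun r => Pi.single r (1:F)) (P : Fin k → Fin k → F)) i j
          = (1 : Matrix S S F) i j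
      simp only [Finset.piecewise, i.2, if_true]
      by_cases hij : i = j
      · subst hij; simp
      · have hji : (j : Fin k) ≠ i := fun h => hij (Subtype.ext h).symm
        simp [Pi.single_apply, Matrix.one_apply, hij, hji]
    · have hne : (i : Fin k) ≠ (j : Fin k) := fun h => j.2 (h ▸ i.2)
      simp [hQ, Matrix.submatrix, Finset.piecewise, i.2, Pi.single_apply, hne.symm]
    · simp [hQ, Matrix.submatrix, Finset.piecewise, i.2, minorOff]
    · simp [hQ, Matrix.submatrix, Finset.piecewise, i.2, minorOff]
  · rw [hblock, Matrix.det_fromBlocks_zero₁₂, Matrix.det_one, one_mul]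

lemma existsBetaPow {F : Type*} [Field F] [Fintype F] {q' β : ℕ}
    (hcardm : Fintype.card F - 1 = β * (q' + 1)) (a : F) (ha : a ^ (q' + 1) = 1) :
    ∃ x : F, x ≠ 0 ∧ x ^ β = a := by
  classical
  have ha0 : a ≠ 0 := by rintro rfl; simp at ha
  set u : Fˣ := Units.mk0 a ha0 with hu
  obtain ⟨g, hg⟩ := IsCyclic.exists_generator (α := Fˣ)
  obtain ⟨m, hm'⟩ := mem_powers_iff_mem_zpowers.mpr (hg u)
  have hm : g ^ m = u := hm'
  have horder : orderOf g = Fintype.card F - 1 := by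
    rw [orderOf_eq_card_of_forall_mem_zpowers hg, Nat.card_eq_fintype_card, Fintype.card_units]
  have hupow : u ^ (q' + 1) = 1 := by
    ext; push_cast [hu]; exact ha
  have hdvd : orderOf g ∣ m * (q' + 1) := by
    apply orderOf_dvd_of_pow_eq_one
    rw [pow_mul, hm, hupow]
  rw [horder, hcardm] at hdvd
  obtain ⟨d, hd⟩ := (Nat.mul_dvd_mul_iff_right (Nat.succ_pos q')).mp hdvd
  refine ⟨((g ^ d : Fˣ) : F), Units.ne_zero _, ?_⟩
  have : (g ^ d) ^ β = u := by rw [← pow_mul, ← hm, hd]; ring_nf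
  calc ((g ^ d : Fˣ) : F) ^ β = (((g ^ d) ^ β : Fˣ) : F) := by push_cast; ring
    _ = a := by rw [this]; rfl

lemma charPofCard {p e : ℕ} (hp : p.Prime) (he : 0 < e) (F : Type*) [Field F] [Fintype F]
    (hcard : Fintype.card F = p ^ e) : CharP F p := by
  obtain ⟨n, hr, hc⟩ := FiniteField.card F (ringChar F)
  have hpr : p = ringChar F := by
    have h1 : p ∣ (ringChar F) ^ (n : ℕ) := by
      rw [← hc, hcard]
      exact dvd_pow_self p he.ne'
    exact (Nat.prime_dvd_prime_iff_eq hp hr).mp (hp.dvd_of_dvd_pow h1)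
  rw [hpr]; exact ringChar.charP F

open Matrix in
lemma fieldKey {p e l n k : ℕ} (hp : p.Prime) (hl0 : 0 < l) (hle : l < e)
    (F : Type*) [Field F] [Fintype F] (hcard : Fintype.card F = p ^ e)
    (hdvd : p ^ (e - l) + 1 ∣ p ^ e - 1)
    (β : ℕ) (hβ : β = (p ^ e - 1) / (p ^ (e - l) + 1))
    (hkn : k ≤ n) (G : Matrix (Fin k) (Fin n) F)
    (hstd : ∀ r s : Fin k, G r (Fin.castLE hkn s) = if r = s then 1 else 0)
    (t : ℕ) (ht : t + 1 ≤ k)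
    (hvanish : ∀ S : Finset (Fin k), S.card ≤ t →
      (minorOff (G * ((G).map (fun x => x ^ p ^ (e - l)))ᵀ) S).det = 0)
    (Rs : Finset (Fin k)) (hRcard : Rs.card = t + 1)
    (hRdet : (minorOff (G * ((G).map (fun x => x ^ p ^ (e - l)))ᵀ) Rs).det ≠ 0)
    (a : Fin n → F)
    (ha1 : ∀ s ∈ Rs, ¬ ∃ x : F, x ≠ 0 ∧ x ^ β = a (Fin.castLE hkn s))
    (ha2 : ∀ j : Fin n, (∀ s ∈ Rs, Fin.castLE hkn s ≠ j) → ∃ x : F, x ≠ 0 ∧ x ^ β = a j) :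
    (Matrix.of fun r s : Fin k => ∑ j, a j ^ (p ^ l + 1) * (G r j * G s j ^ p ^ l)).det ≠ 0 := by
  classical
  haveI : CharP F p := charPofCard hp (hl0.trans hle) F hcard
  haveI : ExpChar F p := ExpChar.prime hp
  set q' : ℕ := p ^ (e - l) with hq'
  have hβmul : β * (q' + 1) = p ^ e - 1 := by rw [hβ]; exact Nat.div_mul_cancel hdvd
  have hcardm : Fintype.card F - 1 = β * (q' + 1) := by rw [hcard, hβmul]
  have hpe : ∀ x : F, x ^ p ^ e = x := by
    intro x; rw [← hcard]; exact FiniteField.pow_card x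
  have hbpow : ∀ x : F, x ≠ 0 → (x ^ β) ^ (q' + 1) = 1 := by
    intro x hx
    rw [← pow_mul, hβmul, ← hcard]
    exact FiniteField.pow_card_sub_one_eq_one x hx
  set ε : Fin k → F := fun r => a (Fin.castLE hkn r) ^ (q' + 1) - 1 with hε
  have hεne : ∀ r ∈ Rs, ε r ≠ 0 := by
    intro r hr h0
    have h1 : a (Fin.castLE hkn r) ^ (q' + 1) = 1 := by
      have := sub_eq_zero.mp h0; linear_combination this
    exact ha1 r hr (existsBetaPow hcardm _ h1)
  have hεzero : ∀ j : Fin n, (∀ s ∈ Rs, Fin.castLE hkn s ≠ j) → a j ^ (q' + 1) = 1 := by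
    intro j hj
    obtain ⟨x, hx, hxa⟩ := ha2 j hj
    rw [← hxa]; exact hbpow x hx
  set P : Matrix (Fin k) (Fin k) F := G * ((G).map (fun x => x ^ q'))ᵀ with hP
  have hPapp : ∀ r s, P r s = ∑ j, G r j * G s j ^ q' := by
    intro r s
    simp [hP, Matrix.mul_apply, Matrix.transpose_apply, Matrix.map_apply]
  set N : Matrix (Fin k) (Fin k) F :=
    Matrix.of fun r s => ∑ j, a j ^ (q' + 1) * (G r j * G s j ^ q') with hN
  -- entry identity
  have hentry : ∀ r s, N r s = P r s + (if r ∈ Rs ∧ s = r then ε r else 0) := by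
    intro r s
    have hsum : (∑ j, (a j ^ (q' + 1) - 1) * (G r j * G s j ^ q'))
        = if r ∈ Rs ∧ s = r then ε r else 0 := by
      rw [← Finset.sum_subset (Finset.subset_univ (Rs.image (Fin.castLE hkn)))
        (by
          intro j _ hj
          have hz : a j ^ (q' + 1) = 1 := by
            apply hεzero
            intro s hs hcast
            exact hj (Finset.mem_image.mpr ⟨s, hs, hcast⟩)
          rw [hz, sub_self, zero_mul])]
      rw [Finset.sum_image (by intro x _ y _ h; exact Fin.castLE_injective hkn h)]
      have hq0 : q' ≠ 0 := pow_ne_zero (e - l) hp.ne_zero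
      have : ∀ u ∈ Rs, (a (Fin.castLE hkn u) ^ (q' + 1) - 1) *
          (G r (Fin.castLE hkn u) * G s (Fin.castLE hkn u) ^ q')
          = if u = r then (if s = r then ε u else 0) else 0 := by
        intro u _
        rw [hstd r u, hstd s u]
        by_cases h1 : u = r
        · subst h1
          by_cases h2 : s = u <;> simp [h2, hε, zero_pow hq0]
        · have h1' : r ≠ u := Ne.symm h1
          simp [h1, h1', zero_pow hq0]
      rw [Finset.sum_congr rfl this, Finset.sum_ite_eq' Rs r]
      by_cases hr : r ∈ Rs <;> by_cases hs : s = r <;> simp [hr, hs]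
    have expand : N r s = P r s + ∑ j, (a j ^ (q' + 1) - 1) * (G r j * G s j ^ q') := by
      rw [hPapp, hN, ← Finset.sum_add_distrib]
      simp only [Matrix.of_apply]
      congr 1; funext j; ring
    rw [expand, hsum]
  -- row form
  set m : Fin k → Fin k → F := fun r => ε r • (Pi.single r (1:F) : Fin k → F) with hm
  have hrow : N = Rs.piecewise (m + fun r => P r) (fun r => P r) := by
    funext r s
    by_cases hr : r ∈ Rs
    · rw [Finset.piecewise_eq_of_mem _ _ _ hr, hentry]
      show _ = m r s + P r s
      simp only [hm, Pi.smul_apply, Pi.single_apply, smul_eq_mul]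
      by_cases hs : s = r <;> simp [hs, hr, add_comm]
    · rw [Finset.piecewise_eq_of_notMem _ _ _ hr, hentry]
      show _ = P r s
      simp [hr]
  have hdet : N.det = ∑ S ∈ Rs.powerset,
      Matrix.det (S.piecewise m (fun r => P r)) := by
    show Matrix.detRowAlternating N = _
    rw [hrow]
    exact Matrix.detRowAlternating.toMultilinearMap.map_piecewise_add m _ Rs
  have hterm : ∀ S ∈ Rs.powerset,
      Matrix.det (S.piecewise m (fun r => P r))
        = (∏ r ∈ S, ε r) * (minorOff P S).det := by
    intro S _
    have harg : S.piecewise m (fun r => P r)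
        = S.piecewise (fun r => ε r • (S.piecewise (fun r' => Pi.single r' (1:F)) P) r)
            (S.piecewise (fun r' => Pi.single r' (1:F)) P) := by
      funext r
      by_cases hr : r ∈ S
      · rw [Finset.piecewise_eq_of_mem _ _ _ hr, Finset.piecewise_eq_of_mem _ _ _ hr]
        erw [Finset.piecewise_eq_of_mem _ _ _ hr]
      · rw [Finset.piecewise_eq_of_notMem _ _ _ hr, Finset.piecewise_eq_of_notMem _ _ _ hr]
        erw [Finset.piecewise_eq_of_notMem _ _ _ hr]
    rw [harg]
    have h2 := Matrix.detRowAlternating.toMultilinearMap.map_piecewise_smul ε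
      (S.piecewise (fun r' => Pi.single r' (1:F)) P) S
    have h3 : Matrix.det (S.piecewise
          (fun r => ε r • (S.piecewise (fun r' => Pi.single r' (1:F)) P) r)
          (S.piecewise (fun r' => Pi.single r' (1:F)) P))
        = (∏ i ∈ S, ε i) • Matrix.det (S.piecewise (fun r' => Pi.single r' (1:F)) P) := h2
    rw [h3, smul_eq_mul, detPiecewiseSingle_s15 P S]
  have hNdet : N.det = (∏ r ∈ Rs, ε r) * (minorOff P Rs).det := by
    rw [hdet, Finset.sum_eq_single_of_mem Rs (Finset.mem_powerset_self Rs)]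
    · exact hterm Rs (Finset.mem_powerset_self Rs)
    · intro S hS hSne
      rw [hterm S hS]
      have hcardS : S.card ≤ t := by
        have hsub : S ⊂ Rs := (Finset.mem_powerset.mp hS).ssubset_of_ne hSne
        have := Finset.card_lt_card hsub
        omega
      rw [hvanish S hcardS, mul_zero]
  have hNne : N.det ≠ 0 :=
    hNdet ▸ mul_ne_zero (Finset.prod_ne_zero_iff.mpr hεne) hRdet
  -- transfer to M
  intro hM0
  apply hNne
  set φ : F →+* F := iterateFrobenius F p (e - l) with hφ
  have hφdef : ∀ x : F, φ x = x ^ q' := fun x => iterateFrobenius_def p (e - l) x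
  set M : Matrix (Fin k) (Fin k) F :=
    Matrix.of fun r s : Fin k => ∑ j, a j ^ (p ^ l + 1) * (G r j * G s j ^ p ^ l) with hM
  have hNM : N = (φ.mapMatrix M)ᵀ := by
    funext s r
    show N s r = φ (M r s)
    rw [hM, hN]
    simp only [Matrix.of_apply]
    rw [map_sum]
    apply Finset.sum_congr rfl
    intro j _
    rw [_root_.map_mul, _root_.map_pow, _root_.map_mul, _root_.map_pow,
      hφdef (a j), hφdef (G r j), hφdef (G s j)]
    have hmulpow : p ^ l * q' = p ^ e := by
      rw [hq', ← pow_add]; congr 1; omega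
    have h1 : ((a j) ^ q') ^ (p ^ l + 1) = a j ^ (q' + 1) := by
      rw [← pow_mul]
      have hexp : q' * (p ^ l + 1) = p ^ e + q' := by
        rw [Nat.mul_add, mul_one, mul_comm q' (p ^ l), hmulpow]
      rw [hexp, pow_add, hpe]; ring
    have h2 : ((G s j) ^ q') ^ (p ^ l) = G s j := by
      rw [← pow_mul, mul_comm, hmulpow, hpe]
    rw [h1, h2]
    ring
  rw [hNM, Matrix.det_transpose, ← RingHom.map_det, hM0, map_zero]

open Matrix in
/-- construction of `l`-Galois LCD codes `C^α` over `R` from a linear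
code `C = γ_1C_1 ⊕ γ_2C_2 ⊕ γ_3C_3 ⊕ γ_4C_4` with generator matrices
`G_i = [I_{k_i} : M_i]`, `P_i = G_i(F^{e−l}(G_i))ᵀ`, where
`β = (p^e − 1)/(p^{e−l} + 1)` and `(F_q^*)^β = {x^β : x ≠ 0}`. -/
theorem statement15 {p e l n : ℕ} (hp : p.Prime) (hl0 : 0 < l) (hle : l < e)
    (F : Type*) [Field F] [Fintype F] (hcard : Fintype.card F = p ^ e)
    (hdvd : p ^ (e - l) + 1 ∣ p ^ e - 1)
    (β : ℕ) (hβ : β = (p ^ e - 1) / (p ^ (e - l) + 1))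
    (k : Fin 4 → ℕ) (hkn : ∀ i, k i ≤ n)
    (G : ∀ i, Matrix (Fin (k i)) (Fin n) F)
    -- the rows of `G i` form a basis of `C_i` (`G i` has rank `k i`):
    (hGli : ∀ i, LinearIndependent F (fun r : Fin (k i) => G i r))
    (C : Submodule (RR F) (Fin n → RR F))
    (hC : ∀ i, compCode (C : Set (Fin n → RR F)) i =
      (Submodule.span F (Set.range (fun r : Fin (k i) => G i r)) : Set (Fin n → F)))
    -- standard form `G_i = [I_{k_i} : M_i]`:
    (hstd : ∀ i, ∀ r s : Fin (k i), G i r (Fin.castLE (hkn i) s) = if r = s then 1 else 0)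
    (t : Fin 4 → ℕ) (ht : ∀ i, t i + 1 ≤ k i)
    (hvanish : ∀ i, ∀ S : Finset (Fin (k i)), S.card ≤ t i →
      (minorOff (G i * ((G i).map (fun x => x ^ p ^ (e - l)))ᵀ) S).det = 0)
    (R : ∀ i, Finset (Fin (k i))) (hRcard : ∀ i, (R i).card = t i + 1)
    (hRdet : ∀ i, (minorOff (G i * ((G i).map (fun x => x ^ p ^ (e - l)))ᵀ) (R i)).det ≠ 0)
    (α : Fin n → RR F)
    -- `α_{ji} ∈ F_q \ (F_q^*)^β` for `j ∈ R_i`: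
    (hα1 : ∀ i, ∀ s ∈ R i, ¬ ∃ x : F, x ≠ 0 ∧ x ^ β = α (Fin.castLE (hkn i) s) i)
    -- `α_{ji} ∈ (F_q^*)^β` for `j ∉ R_i`:
    (hα2 : ∀ (i : Fin 4) (j : Fin n), (∀ s ∈ R i, Fin.castLE (hkn i) s ≠ j) →
      ∃ x : F, x ≠ 0 ∧ x ^ β = α j i) :
    scaleCode α (C : Set (Fin n → RR F)) ∩
      galDualR (p ^ l) (scaleCode α (C : Set (Fin n → RR F))) = {0} := by
  classical
  have hpl0 : p ^ l ≠ 0 := pow_ne_zero l hp.ne_zero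
  haveI : CharP F p := charPofCard hp (hl0.trans hle) F hcard
  haveI : ExpChar F p := ExpChar.prime hp
  apply Set.eq_singleton_iff_unique_mem.mpr
  constructor
  · constructor
    · exact ⟨0, C.zero_mem, by funext j; simp⟩
    · intro t' _
      simp [zero_pow hpl0]
  · rintro c ⟨⟨c', hc'C, hc'eq⟩, hdual⟩
    have hfrob' : ∀ {m : ℕ} (g : Fin m → F), (∑ s, g s) ^ p ^ l = ∑ s, g s ^ p ^ l := by
      intro m g
      have hh := map_sum (iterateFrobenius F p l) g Finset.univ
      simp only [iterateFrobenius_def] at hh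
      exact hh
    have hcomp : ∀ (i : Fin 4) (j : Fin n), c j i = 0 := by
      intro i
      set a : Fin n → F := fun j => α j i with ha
      have hx : (fun j => c' j i) ∈ Submodule.span F (Set.range fun r : Fin (k i) => G i r) := by
        have : (fun j => c' j i) ∈ compCode (C : Set (Fin n → RR F)) i :=
          ⟨c', hc'C, fun j => rfl⟩
        rw [hC i] at this
        exact this
      obtain ⟨x, hxsum⟩ := (Submodule.mem_span_range_iff_exists_fun F).mp hx
      have hcji : ∀ j, c j i = a j * (∑ s, x s * G i s j) := by
        intro j
        have h1 : c j i = α j i * c' j i := by rw [← hc'eq]; rfl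
        have h2 := congrFun hxsum j
        simp only [Finset.sum_apply, Pi.smul_apply, smul_eq_mul] at h2
        rw [h1, ← h2]
      have hdet := fieldKey hp hl0 hle F hcard hdvd β hβ (hkn i) (G i) (hstd i) (t i) (ht i)
        (hvanish i) (R i) (hRcard i) (hRdet i) a (hα1 i) (hα2 i)
      have hM0 : (Matrix.of fun r s : Fin (k i) =>
          ∑ j, a j ^ (p ^ l + 1) * (G i r j * G i s j ^ p ^ l)).mulVec
            (fun s => x s ^ p ^ l) = 0 := by
        funext r
        have hrowmem : (fun j => G i r j) ∈ compCode (C : Set (Fin n → RR F)) i := by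
          rw [hC i]
          exact Submodule.subset_span ⟨r, rfl⟩
        obtain ⟨w, hwC, hw⟩ := hrowmem
        have hw' : ∀ j, w j i = G i r j := hw
        have h0 := hdual (fun j => α j * (gam F i • w) j)
          ⟨gam F i • w, C.smul_mem _ hwC, rfl⟩
        have h1 := congrFun h0 i
        simp only [Finset.sum_apply, Pi.mul_apply, Pi.pow_apply, Pi.smul_apply, smul_eq_mul,
          Pi.zero_apply] at h1
        have heq' : ∑ j, a j * G i r j * (c j i) ^ p ^ l = 0 := by
          rw [← h1]
          apply Finset.sum_congr rfl
          intro j _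
          rw [← hw' j]
          simp [gam, ha]
        calc (Matrix.of fun r s : Fin (k i) =>
              ∑ j, a j ^ (p ^ l + 1) * (G i r j * G i s j ^ p ^ l)).mulVec
                (fun s => x s ^ p ^ l) r
            = ∑ s, (∑ j, a j ^ (p ^ l + 1) * (G i r j * G i s j ^ p ^ l)) * x s ^ p ^ l := by
              simp [Matrix.mulVec, dotProduct]
          _ = ∑ s, ∑ j, (a j ^ (p ^ l + 1) * (G i r j * G i s j ^ p ^ l)) * x s ^ p ^ l :=
              Finset.sum_congr rfl fun s _ => Finset.sum_mul _ _ _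
          _ = ∑ j, ∑ s, (a j ^ (p ^ l + 1) * (G i r j * G i s j ^ p ^ l)) * x s ^ p ^ l :=
              Finset.sum_comm
          _ = ∑ j, a j * G i r j * (c j i) ^ p ^ l := by
              apply Finset.sum_congr rfl
              intro j _
              have hch : (c j i) ^ p ^ l
                  = ∑ s, a j ^ p ^ l * (x s ^ p ^ l * G i s j ^ p ^ l) := by
                rw [hcji j, mul_pow]
                rw [show (∑ s, x s * G i s j) ^ p ^ l = ∑ s, (x s * G i s j) ^ p ^ l
                  from hfrob' _]
                rw [Finset.mul_sum]
                exact Finset.sum_congr rfl fun s _ => by rw [mul_pow]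
              rw [hch, Finset.mul_sum]
              apply Finset.sum_congr rfl
              intro s _
              ring
          _ = 0 := heq'
      have hx0 : (fun s => x s ^ p ^ l) = 0 :=
        Matrix.eq_zero_of_mulVec_eq_zero hdet hM0
      have hxz : ∀ s, x s = 0 := by
        intro s
        have := congrFun hx0 s
        exact pow_eq_zero_iff hpl0 |>.mp this
      intro j
      rw [hcji j]
      simp [hxz]
    funext j
    funext i
    exact hcomp i j
end

section
/- Let 0 < l < e, suppose p^{e−l} + 1 divides p^e − 1, and set β = (p^e − 1)/(p^{e−l} + 1); assume β > 1. Let C be a linear code of length n over R. Then there exists α = (α_1,…,α_n) ∈ R^n with every α_j a unit of R such that C^α is an l-Galois LCD code over R; in particular |C^α| = |C| and, if C ≠ {0}, d_L(C^α) = d_L(C), so C^α is equivalent to C with the same parameters. -/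
open scoped BigOperators

lemma aux_affine_exists {F : Type*} [Field F] {n : ℕ} (f : (Fin n → F) → F)
    (haff : ∀ (j : Fin n) (x : Fin n → F), ∃ A B : F, ∀ t, f (Function.update x j t) = A * t + B)
    (x0 : Fin n → F) (hx0 : f x0 ≠ 0) {t0 t1 : F} (hne : t0 ≠ t1) :
    ∃ lam : Fin n → F, (∀ j, lam j = t0 ∨ lam j = t1) ∧ f lam ≠ 0 := by
  classical
  by_contra hcon
  push_neg at hcon
  suffices h : ∀ (m : ℕ) (x : Fin n → F),
      (Finset.univ.filter (fun j => ¬(x j = t0 ∨ x j = t1))).card ≤ m → f x = 0 by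
    exact hx0 (h n x0 (le_trans (Finset.card_le_univ _) (by simp)))
  intro m
  induction m with
  | zero =>
      intro x hx
      apply hcon
      intro j
      by_contra hj
      have hmem : j ∈ Finset.univ.filter (fun j => ¬(x j = t0 ∨ x j = t1)) := by
        simp only [Finset.mem_filter, Finset.mem_univ, true_and]; exact hj
      have : (Finset.univ.filter (fun j => ¬(x j = t0 ∨ x j = t1))) = ∅ :=
        Finset.card_eq_zero.mp (Nat.le_zero.mp hx)
      rw [this] at hmem
      exact absurd hmem (Finset.notMem_empty j)
  | succ m ih =>
      intro x hx
      by_cases hall : ∀ j, x j = t0 ∨ x j = t1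
      · exact hcon x hall
      · push_neg at hall
        obtain ⟨j, hj⟩ := hall
        have hjmem : j ∈ Finset.univ.filter (fun i => ¬(x i = t0 ∨ x i = t1)) := by
          simp only [Finset.mem_filter, Finset.mem_univ, true_and]
          rw [not_or]; exact hj
        obtain ⟨A, B, hAB⟩ := haff j x
        have hupd : ∀ t : F, t = t0 ∨ t = t1 →
            (Finset.univ.filter
              (fun i => ¬((Function.update x j t) i = t0 ∨ (Function.update x j t) i = t1))).card ≤ m := by
          intro t ht
          have hsub : (Finset.univ.filter
              (fun i => ¬((Function.update x j t) i = t0 ∨ (Function.update x j t) i = t1))) ⊆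
              (Finset.univ.filter (fun i => ¬(x i = t0 ∨ x i = t1))).erase j := by
            intro i hi
            simp only [Finset.mem_filter, Finset.mem_univ, true_and] at hi
            rcases eq_or_ne i j with rfl | hij
            · rw [Function.update_self] at hi; exact absurd ht hi
            · rw [Function.update_of_ne hij] at hi
              exact Finset.mem_erase.mpr ⟨hij, by
                simp only [Finset.mem_filter, Finset.mem_univ, true_and]; exact hi⟩
          calc _ ≤ ((Finset.univ.filter (fun i => ¬(x i = t0 ∨ x i = t1))).erase j).card :=
                Finset.card_le_card hsub
            _ = (Finset.univ.filter (fun i => ¬(x i = t0 ∨ x i = t1))).card - 1 :=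
                Finset.card_erase_of_mem hjmem
            _ ≤ m := by omega
        have h0 : A * t0 + B = 0 := by rw [← hAB t0]; exact ih _ (hupd t0 (Or.inl rfl))
        have h1 : A * t1 + B = 0 := by rw [← hAB t1]; exact ih _ (hupd t1 (Or.inr rfl))
        have hA : A = 0 := by
          have h2 : A * (t0 - t1) = 0 := by ring_nf; linear_combination h0 - h1
          rcases mul_eq_zero.mp h2 with h | h
          · exact h
          · exact absurd (sub_eq_zero.mp h) hne
        have hB : B = 0 := by rw [hA, zero_mul, zero_add] at h0; exact h0
        have hfx := hAB (x j)
        rw [Function.update_eq_self] at hfx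
        rw [hfx, hA, hB, zero_mul, zero_add]

lemma aux_det_affine {F : Type*} [Field F] {k : ℕ} (A : Matrix (Fin k) (Fin k) F)
    (u v : Fin k → F) :
    ∃ a b : F, ∀ t : F,
      (Matrix.of (fun r s => A r s + t * (u r * v s))).det = a * t + b := by
  classical
  set B : Matrix (Fin k) Unit F := Matrix.of (fun r _ => -(u r)) with hB
  set r1 : (Fin k ⊕ Unit) → F := Sum.elim v 0 with hr1
  set r2 : (Fin k ⊕ Unit) → F := Sum.elim 0 (fun _ => 1) with hr2
  set N0 : Matrix (Fin k ⊕ Unit) (Fin k ⊕ Unit) F := Matrix.fromBlocks A B 0 1 with hN0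
  refine ⟨(N0.updateRow (Sum.inr ()) r1).det, (N0.updateRow (Sum.inr ()) r2).det, fun t => ?_⟩
  have h1 : (Matrix.of (fun r s => A r s + t * (u r * v s)))
      = A - B * (Matrix.of (fun (_ : Unit) s => t * v s)) := by
    ext r s
    simp [hB, Matrix.mul_apply]
    ring
  rw [h1, ← Matrix.det_fromBlocks_one₂₂ A B _]
  have h2 : Matrix.fromBlocks A B (Matrix.of fun (_ : Unit) s => t * v s) 1
      = N0.updateRow (Sum.inr ()) (t • r1 + r2) := by
    ext i j
    rcases i with i | i
    · rw [Matrix.updateRow_ne (by simp)]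
      rcases j with j | j <;> simp [hN0]
    · cases i
      rw [Matrix.updateRow_self]
      rcases j with j | j <;> simp [hr1, hr2]
  rw [h2, Matrix.det_updateRow_add, Matrix.det_updateRow_smul]
  ring

lemma aux_exists_cols {F : Type*} [Field F] {k n : ℕ} (G : Fin k → Fin n → F)
    (hG : LinearIndependent F G) :
    ∃ φ : Fin k → Fin n, (Matrix.of (fun r s => G r (φ s))).det ≠ 0 := by
  classical
  set w : Fin n → (Fin k → F) := fun j r => G r j with hw
  have hrep : ∀ y : Fin k → F, y = ∑ r, y r • (Pi.single r 1 : Fin k → F) := by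
    intro y; ext j
    rw [Finset.sum_apply]
    simp [Pi.single_apply]
  have hspan : Submodule.span F (Set.range w) = ⊤ := by
    by_contra hlt
    have hlt' : Submodule.span F (Set.range w) < ⊤ := lt_top_iff_ne_top.mpr hlt
    obtain ⟨f, hf0, hfker⟩ :=
      Submodule.exists_dual_map_eq_bot_of_lt_top hlt' inferInstance
    set x : Fin k → F := fun r => f (Pi.single r 1) with hx
    have hfy : ∀ y : Fin k → F, f y = ∑ r, y r * x r := by
      intro y
      conv_lhs => rw [hrep y]
      rw [map_sum]
      simp [hx, smul_eq_mul]
    have hx0 : x ≠ 0 := by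
      intro hxz
      apply hf0
      apply LinearMap.ext
      intro y
      rw [hfy y, hxz]
      simp
    have hcol : ∀ j, f (w j) = 0 := by
      intro j
      have hmem : f (w j) ∈ Submodule.map f (Submodule.span F (Set.range w)) :=
        ⟨w j, Submodule.subset_span ⟨j, rfl⟩, rfl⟩
      rw [hfker] at hmem
      exact hmem
    have hzero : ∑ r, x r • G r = 0 := by
      funext j
      rw [Finset.sum_apply]
      have := hcol j
      rw [hfy (w j)] at this
      simpa [hw, mul_comm] using this
    obtain ⟨r, hr⟩ := Function.ne_iff.mp hx0
    exact hr (Fintype.linearIndependent_iff.mp hG x hzero r)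
  obtain ⟨bset, hsub, hspan', hind⟩ := exists_linearIndependent F (Set.range w)
  rw [hspan] at hspan'
  let bas : Module.Basis ↥bset F (Fin k → F) :=
    Module.Basis.mk hind (by rw [Subtype.range_coe, hspan'])
  haveI : Fintype ↥bset := FiniteDimensional.fintypeBasisIndex bas
  have hcardb : Fintype.card ↥bset = k := by
    have h1 := Module.finrank_eq_card_basis bas
    rw [Module.finrank_fintype_fun_eq_card, Fintype.card_fin] at h1
    exact h1.symm
  have e : Fin k ≃ ↥bset := (Fintype.equivOfCardEq (by rw [hcardb, Fintype.card_fin]))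
  have hφ : ∀ s : Fin k, ∃ j : Fin n, w j = (e s : Fin k → F) := by
    intro s
    exact hsub (e s).2
  choose φ hφspec using hφ
  refine ⟨φ, ?_⟩
  set e0 := Pi.basisFun F (Fin k) with he0
  set foo : Module.Basis (Fin k) F (Fin k → F) := bas.reindex e.symm with hfoo
  have hM : (Matrix.of (fun r s => G r (φ s))) = e0.toMatrix ⇑foo := by
    ext r s
    rw [Module.Basis.toMatrix_apply]
    have h2 : foo s = (e s : Fin k → F) := by
      rw [hfoo, Module.Basis.reindex_apply, Equiv.symm_symm]
      simp only [bas, Module.Basis.coe_mk]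
    rw [h2]
    simp only [he0, Pi.basisFun_repr]
    rw [← hφspec s]
    simp [hw]
  have hunit : IsUnit (e0.det ⇑foo) := e0.isUnit_det foo
  rw [Module.Basis.det_apply] at hunit
  rw [hM]
  exact isUnit_iff_ne_zero.mp hunit

lemma aux_field_LCD {F : Type*} [Field F] {p l : ℕ} (hp : p.Prime) (hchar : CharP F p)
    (g : F) (hg0 : g ≠ 0) (hg1 : g ^ (p ^ l + 1) ≠ 1)
    {n : ℕ} (D : Submodule F (Fin n → F)) [FiniteDimensional F (Fin n → F)] :
    ∃ a : Fin n → F, (∀ j, a j ≠ 0) ∧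
      scaleCodeF a (D : Set (Fin n → F)) ∩
        galDualF (p ^ l) (scaleCodeF a (D : Set (Fin n → F))) = {0} := by
  classical
  haveI := hchar
  haveI := Fact.mk hp
  haveI : ExpChar F p := ExpChar.prime hp
  set pl := p ^ l with hpl
  have hpl0 : pl ≠ 0 := pow_ne_zero _ hp.pos.ne'
  set σ : F →+* F := iterateFrobenius F p l with hσ
  have hσdef : ∀ x : F, σ x = x ^ pl := fun x => iterateFrobenius_def p l x
  -- basis of D
  set k := Module.finrank F D with hk
  let b : Module.Basis (Fin k) F D := Module.finBasis F D
  set G : Fin k → (Fin n → F) := fun r => ((b r : D) : Fin n → F) with hG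
  have hGD : ∀ r, G r ∈ D := fun r => (b r).2
  have hGind : LinearIndependent F G :=
    (b.linearIndependent.map' D.subtype (Submodule.ker_subtype D))
  have hrepD : ∀ x ∈ D, ∃ μ : Fin k → F, ∀ j, x j = ∑ r, μ r * G r j := by
    intro x hx
    refine ⟨fun r => b.repr ⟨x, hx⟩ r, fun j => ?_⟩
    have h1 := Module.Basis.sum_repr b ⟨x, hx⟩
    have h2 := congrArg (fun z : D => (z : Fin n → F) j) h1
    simp only [Submodule.coe_sum, SetLike.val_smul, Finset.sum_apply, Pi.smul_apply,
      smul_eq_mul] at h2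
    exact h2.symm
  -- the determinant function
  set f : (Fin n → F) → F :=
    fun lam => (Matrix.of fun r s => ∑ j, lam j * (G r j * σ (G s j))).det with hf
  -- affineness
  have haff : ∀ (j0 : Fin n) (x : Fin n → F), ∃ A B : F, ∀ t,
      f (Function.update x j0 t) = A * t + B := by
    intro j0 x
    obtain ⟨a, c, hac⟩ := aux_det_affine
      (Matrix.of fun r s => ∑ j ∈ Finset.univ.erase j0, x j * (G r j * σ (G s j)))
      (fun r => G r j0) (fun s => σ (G s j0))
    refine ⟨a, c, fun t => ?_⟩
    rw [← hac t]
    have hMeq : (Matrix.of fun r s => ∑ j, Function.update x j0 t j * (G r j * σ (G s j)))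
        = (Matrix.of fun r s =>
            (Matrix.of fun r s => ∑ j ∈ Finset.univ.erase j0, x j * (G r j * σ (G s j))) r s
              + t * (G r j0 * σ (G s j0))) := by
      ext r s
      simp only [Matrix.of_apply]
      rw [← Finset.add_sum_erase _ _ (Finset.mem_univ j0)]
      rw [Function.update_self]
      have : ∑ j ∈ Finset.univ.erase j0, Function.update x j0 t j * (G r j * σ (G s j))
          = ∑ j ∈ Finset.univ.erase j0, x j * (G r j * σ (G s j)) := by
        apply Finset.sum_congr rfl
        intro j hj
        rw [Function.update_of_ne (Finset.ne_of_mem_erase hj)]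
      rw [this]
      ring
    simp only [hf]
    rw [hMeq]
  -- base point
  obtain ⟨φ, hφdet⟩ := aux_exists_cols G hGind
  have hφinj : Function.Injective φ := by
    intro s1 s2 h12
    by_contra hne
    apply hφdet
    apply Matrix.det_zero_of_column_eq hne
    intro r
    simp [h12]
  have hbase : f (fun j => if j ∈ Finset.image φ Finset.univ then (1 : F) else 0) ≠ 0 := by
    have hBC : (Matrix.of fun r s =>
        ∑ j, (if j ∈ Finset.image φ Finset.univ then (1 : F) else 0) * (G r j * σ (G s j)))
        = (Matrix.of fun r s' => G r (φ s')) * (Matrix.of fun r s' => G r (φ s')).transpose.map σ := by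
      ext r s
      simp only [Matrix.of_apply, Matrix.mul_apply, Matrix.map_apply, Matrix.transpose_apply]
      have h1 : ∀ j : Fin n, (if j ∈ Finset.image φ Finset.univ then (1:F) else 0) * (G r j * σ (G s j))
          = if j ∈ Finset.image φ Finset.univ then G r j * σ (G s j) else 0 := by
        intro j
        split <;> simp
      simp only [h1]
      rw [Finset.sum_ite_mem, Finset.univ_inter,
        Finset.sum_image (fun x _ y _ h => hφinj h)]
    simp only [hf]
    rw [hBC, Matrix.det_mul]
    have hdet2 : ((Matrix.of fun r s' => G r (φ s')).transpose.map σ).det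
        = σ (Matrix.of fun r s' => G r (φ s')).det := by
      rw [← Matrix.det_transpose ((Matrix.of fun r s' => G r (φ s')))]
      exact (RingHom.map_det σ _).symm
    rw [hdet2]
    exact mul_ne_zero hφdet (by rwa [map_ne_zero σ])
  -- choose lambda
  obtain ⟨lam, hlam, hflam⟩ :=
    aux_affine_exists f haff _ hbase (t0 := (1 : F)) (t1 := g ^ (pl + 1))
      (fun h => hg1 h.symm)
  set M : Matrix (Fin k) (Fin k) F :=
    Matrix.of fun r s => ∑ j, lam j * (G r j * σ (G s j)) with hM
  have hMdet : M.det ≠ 0 := hflam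
  set a : Fin n → F := fun j => if lam j = 1 then 1 else g with ha
  have ha0 : ∀ j, a j ≠ 0 := by
    intro j
    simp only [ha]
    split
    · exact one_ne_zero
    · exact hg0
  have hapow : ∀ j, a j ^ (pl + 1) = lam j := by
    intro j
    simp only [ha]
    by_cases hc : lam j = 1
    · rw [if_pos hc, one_pow, hc]
    · rw [if_neg hc]
      rcases hlam j with h | h
      · exact absurd h hc
      · rw [h]
  refine ⟨a, ha0, ?_⟩
  apply Set.eq_singleton_iff_unique_mem.mpr
  constructor
  · refine ⟨⟨0, D.zero_mem, ?_⟩, ?_⟩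
    · funext j; simp
    · intro t ht
      show ∑ j, t j * (0 : Fin n → F) j ^ pl = 0
      simp [zero_pow hpl0]
  · rintro x ⟨⟨c, hcD, hxc⟩, hx2⟩
    obtain ⟨μ, hμ⟩ := hrepD c hcD
    have hσc : ∀ j, σ (c j) = ∑ s, σ (μ s) * σ (G s j) := by
      intro j
      rw [hμ j, map_sum]
      exact Finset.sum_congr rfl fun s _ => map_mul σ _ _
    have heq : ∀ r, ∑ s, σ (μ s) * M r s = 0 := by
      intro r
      have ht : (fun j => a j * G r j) ∈ scaleCodeF a (D : Set (Fin n → F)) :=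
        ⟨G r, hGD r, rfl⟩
      have h0 := hx2 _ ht
      rw [← hxc] at h0
      have hterm : ∀ j, (a j * G r j) * (a j * c j) ^ pl = lam j * (G r j * σ (c j)) := by
        intro j
        rw [mul_pow, hσdef, ← hapow j, pow_succ]
        ring
      have h1 : ∑ j, lam j * (G r j * σ (c j)) = 0 := by
        rw [← h0]
        exact Finset.sum_congr rfl fun j _ => (hterm j).symm
      calc ∑ s, σ (μ s) * M r s
          = ∑ s, ∑ j, σ (μ s) * (lam j * (G r j * σ (G s j))) := by
            apply Finset.sum_congr rfl
            intro s _
            rw [hM]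
            simp only [Matrix.of_apply]
            rw [Finset.mul_sum]
        _ = ∑ j, ∑ s, σ (μ s) * (lam j * (G r j * σ (G s j))) := Finset.sum_comm
        _ = ∑ j, lam j * (G r j * σ (c j)) := by
            apply Finset.sum_congr rfl
            intro j _
            rw [hσc j, Finset.mul_sum, Finset.mul_sum]
            exact Finset.sum_congr rfl fun s _ => by ring
        _ = 0 := h1
    have hMv : M.mulVec (fun s => σ (μ s)) = 0 := by
      funext r
      show ∑ s, M r s * σ (μ s) = 0
      rw [← heq r]
      exact Finset.sum_congr rfl fun s _ => mul_comm _ _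
    have hU : IsUnit M.det := isUnit_iff_ne_zero.mpr hMdet
    have hν : (fun s => σ (μ s)) = 0 := by
      calc (fun s => σ (μ s)) = (M⁻¹ * M).mulVec (fun s => σ (μ s)) := by
            rw [Matrix.nonsing_inv_mul M hU, Matrix.one_mulVec]
        _ = M⁻¹.mulVec (M.mulVec (fun s => σ (μ s))) := (Matrix.mulVec_mulVec _ _ _).symm
        _ = M⁻¹.mulVec 0 := by rw [hMv]
        _ = 0 := Matrix.mulVec_zero _
    have hμ0 : ∀ s, μ s = 0 := by
      intro s
      have := congrFun hν s
      simpa [map_eq_zero] using this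
    have hc0 : c = 0 := by
      funext j
      rw [hμ j]
      simp [hμ0]
    rw [← hxc, hc0]
    funext j
    simp


def compSub {F : Type*} [Field F] {n : ℕ} (C : Submodule (RR F) (Fin n → RR F)) (i : Fin 4) :
    Submodule F (Fin n → F) where
  carrier := {x | ∃ c ∈ C, ∀ j, c j i = x j}
  add_mem' := by
    rintro x y ⟨c1, h1, e1⟩ ⟨c2, h2, e2⟩
    exact ⟨c1 + c2, C.add_mem h1 h2, fun j => by
      simp only [Pi.add_apply]
      rw [e1 j, e2 j]⟩
  zero_mem' := ⟨0, C.zero_mem, fun j => rfl⟩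
  smul_mem' := by
    rintro a x ⟨c, hc, ec⟩
    refine ⟨(fun _ => a : RR F) • c, C.smul_mem _ hc, fun j => ?_⟩
    show ((fun _ => a : RR F) • c) j i = (a • x) j
    have h1 : ((fun _ => a : RR F) • c) j i = a * c j i := rfl
    rw [h1, ec j]
    rfl

/-- for `0 < l < e` with `p^{e−l} + 1 ∣ p^e − 1` and
`β = (p^e − 1)/(p^{e−l} + 1) > 1`, every linear code `C` over `R` is equivalent
(via scaling by a vector of units) to an `l`-Galois LCD code `C^α` with the same
cardinality and the same minimum Lee distance. -/
theorem statement16 {p e l n : ℕ} (hp : p.Prime) (hl0 : 0 < l) (hle : l < e)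
    (F : Type*) [Field F] [Fintype F] [DecidableEq F] (hcard : Fintype.card F = p ^ e)
    (hdvd : p ^ (e - l) + 1 ∣ p ^ e - 1)
    (β : ℕ) (hβ : β = (p ^ e - 1) / (p ^ (e - l) + 1)) (hβ1 : 1 < β)
    (C : Submodule (RR F) (Fin n → RR F)) :
    ∃ α : Fin n → RR F, (∀ j, IsUnit (α j)) ∧
      scaleCode α (C : Set (Fin n → RR F)) ∩
        galDualR (p ^ l) (scaleCode α (C : Set (Fin n → RR F))) = {0} ∧
      Nat.card (scaleCode α (C : Set (Fin n → RR F))) = Nat.card C ∧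
      ((C : Set (Fin n → RR F)) ≠ {0} →
        dLee (scaleCode α (C : Set (Fin n → RR F))) = dLee (C : Set (Fin n → RR F))) := by
  classical
  have hchar : CharP F p := by
    have hch : CharP F (ringChar F) := ringChar.charP F
    obtain ⟨m, hpr, hcn⟩ := FiniteField.card F (ringChar F)
    have hpe : p ^ e = ringChar F ^ (m : ℕ) := by rw [← hcard, hcn]
    have h1 : p ∣ ringChar F ^ (m : ℕ) := by
      rw [← hpe]
      exact dvd_pow_self p (by omega)
    have h2 : p = ringChar F := (Nat.prime_dvd_prime_iff_eq hp hpr).mp (hp.dvd_of_dvd_pow h1)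
    rwa [h2]
  have hpe2 : 2 ≤ p ^ e := le_trans hp.two_le (Nat.le_self_pow (by omega) p)
  obtain ⟨g, hg0, hg1⟩ : ∃ g : F, g ≠ 0 ∧ g ^ (p ^ l + 1) ≠ 1 := by
    by_contra hcon
    push_neg at hcon
    obtain ⟨ζ, hζ⟩ := IsCyclic.exists_generator (α := Fˣ)
    have hcardu : Fintype.card Fˣ = p ^ e - 1 := by
      rw [Fintype.card_units, hcard]
    have hord : orderOf ζ = p ^ e - 1 := by
      rw [orderOf_eq_card_of_forall_mem_zpowers hζ, Nat.card_eq_fintype_card, hcardu]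
    have hζ1 : ζ ^ (p ^ l + 1) = 1 := by
      have h1 : ((ζ : F)) ^ (p ^ l + 1) = 1 := hcon _ (Units.ne_zero ζ)
      ext
      push_cast
      exact h1
    have hdvd1 : p ^ e - 1 ∣ p ^ l + 1 := by
      rw [← hord]
      exact orderOf_dvd_of_pow_eq_one hζ1
    have hmul : (p ^ l + 1) * p ^ (e - l) = p ^ e + p ^ (e - l) := by
      rw [add_mul, one_mul, ← pow_add]
      congr 2
      omega
    have hdvd2 : p ^ e - 1 ∣ p ^ e + p ^ (e - l) := by
      rw [← hmul]
      exact Dvd.dvd.mul_right hdvd1 _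
    have hdvd3 : p ^ e - 1 ∣ p ^ (e - l) + 1 := by
      have h4 := Nat.dvd_sub hdvd2 (dvd_refl (p ^ e - 1))
      have h5 : p ^ e + p ^ (e - l) - (p ^ e - 1) = p ^ (e - l) + 1 := by omega
      rwa [h5] at h4
    have heq2 : p ^ (e - l) + 1 = p ^ e - 1 := Nat.dvd_antisymm hdvd hdvd3
    rw [hβ, heq2, Nat.div_self (by omega : 0 < p ^ e - 1)] at hβ1
    exact lt_irrefl 1 hβ1
  have hcomp : ∀ i : Fin 4, ∃ a : Fin n → F, (∀ j, a j ≠ 0) ∧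
      scaleCodeF a ((compSub C i : Submodule F (Fin n → F)) : Set (Fin n → F)) ∩
        galDualF (p ^ l) (scaleCodeF a
          ((compSub C i : Submodule F (Fin n → F)) : Set (Fin n → F))) = {0} :=
    fun i => aux_field_LCD hp hchar g hg0 hg1 (compSub C i)
  choose aa haa0 haaLCD using hcomp
  set α : Fin n → RR F := fun j i => aa i j with hα
  have hα0 : ∀ (j : Fin n) (i : Fin 4), α j i ≠ 0 := fun j i => haa0 i j
  have hαu : ∀ j, IsUnit (α j) := by
    intro j
    refine isUnit_iff_exists_inv.mpr ⟨fun i => (α j i)⁻¹, ?_⟩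
    funext i
    exact mul_inv_cancel₀ (hα0 j i)
  have hpl0 : p ^ l ≠ 0 := pow_ne_zero _ hp.pos.ne'
  refine ⟨α, hαu, ?_, ?_, ?_⟩
  · apply Set.eq_singleton_iff_unique_mem.mpr
    constructor
    · refine ⟨⟨0, C.zero_mem, ?_⟩, ?_⟩
      · funext j
        exact mul_zero (α j)
      · intro t ht
        show ∑ j, t j * (0 : Fin n → RR F) j ^ (p ^ l) = 0
        simp [zero_pow hpl0]
    · rintro x ⟨⟨c, hcC, hxc⟩, hx2⟩
      funext j i
      have hxi : (fun j => x j i) ∈ scaleCodeF (aa i)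
            ((compSub C i : Submodule F (Fin n → F)) : Set (Fin n → F)) ∩
          galDualF (p ^ l) (scaleCodeF (aa i)
            ((compSub C i : Submodule F (Fin n → F)) : Set (Fin n → F))) := by
        constructor
        · refine ⟨fun j => c j i, ⟨c, hcC, fun j => rfl⟩, ?_⟩
          funext j'
          have h := congrFun (congrFun hxc j') i
          exact h
        · rintro t' ⟨y, ⟨cy, hcy, hcyy⟩, hty⟩
          have hmemC : (gam F i) • cy ∈ C := C.smul_mem _ hcy
          have htR : (fun j => α j * ((gam F i) • cy) j) ∈
              scaleCode α (C : Set (Fin n → RR F)) := ⟨(gam F i) • cy, hmemC, rfl⟩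
          have h0 := hx2 _ htR
          have h0i := congrFun h0 i
          rw [Finset.sum_apply] at h0i
          have h0i2 : ∑ j : Fin n, (α j * ((gam F i) • cy) j * x j ^ (p ^ l)) i = 0 :=
            h0i.trans rfl
          show ∑ j, t' j * ((fun j => x j i) j) ^ (p ^ l) = 0
          rw [← hty]
          rw [← h0i2]
          apply Finset.sum_congr rfl
          intro j _
          show (aa i j) * y j * (x j i) ^ (p ^ l)
            = (α j * ((gam F i) • cy) j) i * (x j ^ (p ^ l)) i
          have e1 : (α j * ((gam F i) • cy) j) i = α j i * (gam F i i * cy j i) := rfl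
          have e2 : gam F i i = 1 := by
            show (Pi.single i (1 : F) : Fin 4 → F) i = 1
            simp
          have e3 : (x j ^ (p ^ l)) i = (x j i) ^ (p ^ l) := by
            rw [Pi.pow_apply]
          rw [e1, e2, e3, one_mul, hcyy j]
      rw [haaLCD i] at hxi
      have := Set.mem_singleton_iff.mp hxi
      exact congrFun this j
  · have hinj : Function.Injective (fun c : Fin n → RR F => fun j => α j * c j) := by
      intro c1 c2 h12
      funext j
      exact (hαu j).mul_left_cancel (congrFun h12 j)
    exact Nat.card_image_of_injective hinj _
  · intro _
    have hlee : ∀ c : Fin n → RR F, leeWt (fun j => α j * c j) = leeWt c := by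
      intro c
      apply Finset.sum_congr rfl
      intro j _
      simp only [hammingNorm]
      congr 1
      apply Finset.filter_congr
      intro i _
      constructor
      · intro h hc
        exact h (by show α j i * c j i = 0; rw [hc, mul_zero])
      · intro h
        show α j i * c j i ≠ 0
        exact mul_ne_zero (hα0 j i) h
    have hzero : ∀ c : Fin n → RR F, (fun j => α j * c j) = 0 → c = 0 := by
      intro c h
      funext j
      exact (hαu j).mul_left_cancel (by rw [congrFun h j]; exact (mul_zero _).symm)
    have hsets : leeWt '' {c ∈ scaleCode α (C : Set (Fin n → RR F)) | c ≠ 0}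
        = leeWt '' {c ∈ (C : Set (Fin n → RR F)) | c ≠ 0} := by
      ext w
      constructor
      · rintro ⟨x, ⟨⟨c, hcC, hxc⟩, hx0⟩, hw⟩
        refine ⟨c, ⟨hcC, ?_⟩, ?_⟩
        · intro hc0
          apply hx0
          rw [← hxc, hc0]
          funext j
          exact mul_zero (α j)
        · rw [← hw, ← hxc, hlee c]
      · rintro ⟨c, ⟨hcC, hc0⟩, hw⟩
        refine ⟨fun j => α j * c j, ⟨⟨c, hcC, rfl⟩, ?_⟩, ?_⟩
        · intro hx0
          exact hc0 (hzero c hx0)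
        · rw [← hw, hlee c]
    unfold dLee
    rw [hsets]
end
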